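/- arXiv:2604.22041 — 8 statements merged into one kernel-verified Lean document; each statement's English description precedes it below -/
import Mathlib

section
/- Let (u1, v1) and (u2, v2) be endpoints of two acyclic directed paths in a DAG that share at least one node. Let x be the first shared node (as given by the decomposition where the prefixes of the two paths before x are disjoint). Then the path P from u1 to u2 formed by following the first path from u1 to x and then the reverse of the second path from x back to u2 is acyclic, and x is a collider on P. -/
section CausalDefs

variable {V : Type}

/-- The edge relation has no directed cycles. -/
def AcyclicRel (E : V → V → Prop) : Prop := ∀ v, ¬ Relation.TransGen E v v

/-- `b` is a mediator on the (undirected) path `l`. -/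
def Mediator (E : V → V → Prop) (l : List V) (b : V) : Prop :=
  ∃ a c, [a, b, c] <:+: l ∧ ((E a b ∧ E b c) ∨ (E b a ∧ E c b))

/-- `b` is a confounder on the (undirected) path `l`. -/
def Confounder (E : V → V → Prop) (l : List V) (b : V) : Prop :=
  ∃ a c, [a, b, c] <:+: l ∧ E b a ∧ E b c

/-- `b` is a collider on the (undirected) path `l`. -/
def Collider (E : V → V → Prop) (l : List V) (b : V) : Prop :=
  ∃ a c, [a, b, c] <:+: l ∧ E a b ∧ E c b

/-- An acyclic undirected path: consecutive nodes joined by an edge in some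
direction, no repeated nodes. -/
def UPath (E : V → V → Prop) (l : List V) : Prop :=
  l.Chain' (fun a b => E a b ∨ E b a) ∧ l.Nodup

/-- An acyclic undirected path from `u` to `v` (with at least one edge). -/
def UPathFrom (E : V → V → Prop) (u v : V) (l : List V) : Prop :=
  UPath E l ∧ l.head? = some u ∧ l.getLast? = some v ∧ 2 ≤ l.length

/-- A directed walk from `u` to `v` (nodes may repeat). -/
def DirWalkFrom (E : V → V → Prop) (u v : V) (l : List V) : Prop :=
  l.Chain' E ∧ l.head? = some u ∧ l.getLast? = some v

/-- An acyclic directed path from `u` to `v`. -/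
def DirPathFrom (E : V → V → Prop) (u v : V) (l : List V) : Prop :=
  l.Chain' E ∧ l.Nodup ∧ l.head? = some u ∧ l.getLast? = some v

/-- `d` is a descendant of `b` (every node is its own descendant). -/
def Descendant (E : V → V → Prop) (b d : V) : Prop := Relation.ReflTransGen E b d

/-- The path `l` is d-connected given `Z`: no mediator or confounder on `l` is
in `Z`, and every collider on `l` has a descendant in `Z`. -/
def DConnPath (E : V → V → Prop) (Z : Set V) (l : List V) : Prop :=
  (∀ b, Mediator E l b → b ∉ Z) ∧
  (∀ b, Confounder E l b → b ∉ Z) ∧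
  (∀ b, Collider E l b → ∃ d ∈ Z, Descendant E b d)

/-- `u` and `v` are d-connected given `Z`. -/
def DConnected (E : V → V → Prop) (Z : Set V) (u v : V) : Prop :=
  ∃ l, UPathFrom E u v l ∧ DConnPath E Z l

/-- `u` and `v` are d-separated given `Z`: every acyclic undirected path from
`u` to `v` is blocked. -/
def DSeparated (E : V → V → Prop) (Z : Set V) (u v : V) : Prop :=
  ∀ l, UPathFrom E u v l →
    (∃ b ∈ Z, Mediator E l b ∨ Confounder E l b) ∨
    (∃ b, Collider E l b ∧ ¬ ∃ d ∈ Z, Descendant E b d)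

/-- `w` is an unblocked ancestor of `u` given `Z`: `w = u`, or there is a
directed path from `w` to `u` on which neither `w` nor any internal node
lies in `Z`. -/
def UnblockedAnc (E : V → V → Prop) (Z : Set V) (w u : V) : Prop :=
  w = u ∨ ∃ l : List V, l.Chain' E ∧ l.head? = some w ∧ l.getLast? = some u ∧
    ∀ x ∈ l.dropLast, x ∉ Z

/-- `x` is a source on the path `l`: an endpoint whose adjacent path edge
points away from it, or an (internal) confounder. -/
def SourceOn (E : V → V → Prop) (l : List V) (x : V) : Prop :=
  (∃ b, [x, b] <+: l ∧ E x b) ∨ (∃ b, [b, x] <:+ l ∧ E x b) ∨ Confounder E l x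

end CausalDefs

/-- Two acyclic directed paths intersecting first at `x` (disjoint prefixes)
yield, by following the first path to `x` and the reverse of the second path
back, an acyclic path on which `x` is a collider. -/
theorem directed_paths_intersect_at_collider {V : Type} [Fintype V]
    (E : V → V → Prop) (hacyc : AcyclicRel E)
    (u1 v1 u2 v2 x : V) (a1 b1 a2 b2 : List V)
    (h1 : DirPathFrom E u1 v1 (a1 ++ [x] ++ b1))
    (h2 : DirPathFrom E u2 v2 (a2 ++ [x] ++ b2))
    (hdisj : ∀ y ∈ a1, y ∉ a2)
    (ha1 : a1 ≠ []) (ha2 : a2 ≠ []) :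
    UPath E (a1 ++ [x] ++ a2.reverse) ∧
    UPathFrom E u1 u2 (a1 ++ [x] ++ a2.reverse) ∧
    Collider E (a1 ++ [x] ++ a2.reverse) x := by

  obtain ⟨hc1, hn1, hh1, hl1⟩ := h1
  obtain ⟨hc2, hn2, hh2, hl2⟩ := h2
  -- basic pieces
  have hcA : (a1 ++ [x]).Chain' E := hc1.prefix ⟨b1, by simp⟩
  have hcB : (a2 ++ [x]).Chain' E := hc2.prefix ⟨b2, by simp⟩
  have hEax : ∀ y ∈ a1.getLast?, E y x := by
    have := (List.isChain_append.mp hcA).2.2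
    intro y hy; exact this y hy x rfl
  have hEcx : ∀ y ∈ a2.getLast?, E y x := by
    have := (List.isChain_append.mp hcB).2.2
    intro y hy; exact this y hy x rfl
  have hnA : (a1 ++ [x]).Nodup := hn1.sublist (by simp)
  have hnB : (a2 ++ [x]).Nodup := hn2.sublist (by simp)
  have hxA : x ∉ a1 := by
    have := List.disjoint_of_nodup_append hnA
    intro h; exact this h (by simp)
  have hxB : x ∉ a2 := by
    have := List.disjoint_of_nodup_append hnB
    intro h; exact this h (by simp)
  set a := a1.getLast ha1 with hadef
  set c := a2.getLast ha2 with hcdef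
  have ha1' : a1 = a1.dropLast ++ [a] := (List.dropLast_append_getLast ha1).symm
  have ha2' : a2 = a2.dropLast ++ [c] := (List.dropLast_append_getLast ha2).symm
  have hE1 : E a x := hEax a (by rw [List.getLast?_eq_getLast ha1]; rfl)
  have hE2 : E c x := hEcx c (by rw [List.getLast?_eq_getLast ha2]; rfl)
  -- chain'
  have hchain : (a1 ++ [x] ++ a2.reverse).Chain' (fun p q => E p q ∨ E q p) := by
    refine List.isChain_append.mpr ?_
    refine ⟨hcA.imp (fun _ _ h => Or.inl h), ?_, ?_⟩
    · rw [List.isChain_reverse]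
      exact ((hcB.prefix ⟨[x], rfl⟩).imp (fun _ _ h => Or.inl h)).imp
        (fun _ _ h => h.symm)
    · intro p hp q hq
      rw [List.getLast?_append_of_ne_nil _ (by simp)] at hp
      simp only [List.getLast?_singleton, Option.mem_def, Option.some.injEq] at hp
      subst hp
      rw [List.head?_reverse] at hq
      exact Or.inr (hEcx q hq)
  -- nodup
  have hnodup : (a1 ++ [x] ++ a2.reverse).Nodup := by
    rw [List.append_assoc, List.nodup_append]
    refine ⟨hn1.sublist (by simp), ?_, ?_⟩
    · rw [List.singleton_append, List.nodup_cons]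
      exact ⟨by simpa using hxB, List.nodup_reverse.mpr (hnB.sublist (by simp))⟩
    · intro y hy z hy' hyz; subst hyz
      simp only [List.cons_append, List.nil_append, List.mem_cons,
        List.mem_reverse] at hy'
      rcases hy' with rfl | hy' <;> [exact hxA hy; exact hdisj y hy hy']
  have hUP : UPath E (a1 ++ [x] ++ a2.reverse) := ⟨hchain, hnodup⟩
  -- endpoints
  have hhead : (a1 ++ [x] ++ a2.reverse).head? = some u1 := by
    obtain ⟨h, t, rfl⟩ := List.exists_cons_of_ne_nil ha1
    simpa using hh1
  have hu2 : a2.head? = some u2 := by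
    obtain ⟨h, t, rfl⟩ := List.exists_cons_of_ne_nil ha2
    simpa using hh2
  have hlast : (a1 ++ [x] ++ a2.reverse).getLast? = some u2 := by
    rw [List.getLast?_append_of_ne_nil _ (by simp [ha2]), List.getLast?_reverse]
    exact hu2
  have hlen : 2 ≤ (a1 ++ [x] ++ a2.reverse).length := by
    obtain ⟨h, t, rfl⟩ := List.exists_cons_of_ne_nil ha1
    simp; omega
  -- collider
  have hcol : Collider E (a1 ++ [x] ++ a2.reverse) x := by
    refine ⟨a, c, ⟨a1.dropLast, a2.dropLast.reverse, ?_⟩, hE1, hE2⟩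
    conv_lhs => rw [ha1']
    conv_rhs => rw [ha1']
    rw [show a2.reverse = c :: a2.dropLast.reverse by
      conv_lhs => rw [ha2']
      simp]
    simp
  exact ⟨hUP, ⟨hUP, hhead, hlast, hlen⟩, hcol⟩
end

section
/- Let P1 be a d-connected path from u to m and P2 a d-connected path from m to v (both given conditioning set Z), sharing no node other than m. Then the concatenated path from u to v through m is d-connected given Z, provided that m, in the concatenated path, is either (1) a mediator not in Z, (2) a confounder not in Z, or (3) a collider with a descendant in Z. -/
section AuxConcat
variable {V : Type}

lemma triple_split (q1 q2 : List V) (m a b c : V)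
    (h : [a, b, c] <:+: (q1 ++ [m] ++ q2)) :
    [a, b, c] <:+: (q1 ++ [m]) ∨ [a, b, c] <:+: (m :: q2) ∨
      (b = m ∧ ∃ s t, q1 = s ++ [a] ∧ q2 = c :: t) := by
  obtain ⟨s, t, hst⟩ := h
  have hlen : s.length + 3 + t.length = q1.length + 1 + q2.length := by
    have hl := congrArg List.length hst
    simp [List.length_append] at hl
    omega
  rcases show s.length + 2 ≤ q1.length ∨ s.length + 1 = q1.length ∨ q1.length ≤ s.length
      by omega with h1 | h1 | h1
  · left
    have hp : s ++ [a, b, c] <+: q1 ++ [m] ++ q2 := ⟨t, hst⟩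
    have hp2 : q1 ++ [m] <+: q1 ++ [m] ++ q2 := ⟨q2, by simp⟩
    have := List.prefix_of_prefix_length_le hp hp2 (by simp; omega)
    obtain ⟨t', ht'⟩ := this
    exact ⟨s, t', ht'⟩
  · right; right
    have hst' : (s ++ [a]) ++ (b :: c :: t) = q1 ++ (m :: q2) := by
      simp only [List.append_assoc, List.cons_append, List.nil_append] at hst ⊢
      exact hst
    obtain ⟨hq1, hq2⟩ := List.append_inj hst' (by simp; omega)
    have hb : b = m := by injection hq2
    have hq2' : c :: t = q2 := by injection hq2 with _ h'
    exact ⟨hb, s, t, hq1.symm, hq2'.symm⟩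
  · right; left
    have hs : [a, b, c] ++ t <:+ q1 ++ [m] ++ q2 :=
      ⟨s, by rw [← List.append_assoc]; exact hst⟩
    have hs2 : m :: q2 <:+ q1 ++ [m] ++ q2 := ⟨q1, by simp⟩
    have := List.suffix_of_suffix_length_le hs hs2 (by simp; omega)
    obtain ⟨s', hs'⟩ := this
    exact ⟨s', t, by rw [List.append_assoc]; exact hs'⟩

lemma junction_eq {q1 q2 : List V} {m a c : V}
    (hnd : (q1 ++ [m] ++ q2).Nodup)
    (h : [a, m, c] <:+: (q1 ++ [m] ++ q2)) :
    q1.getLast? = some a ∧ q2.head? = some c := by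
  have hmq2 : m ∉ q2 := by
    rw [List.nodup_append] at hnd
    exact fun hmm => hnd.2.2 m (by simp) m hmm rfl
  rcases triple_split q1 q2 m a m c h with h' | h' | ⟨_, s, t, hq1, hq2⟩
  · exfalso
    obtain ⟨s, t, hst⟩ := h'
    have hsuf : m :: c :: t <:+ q1 ++ [m] :=
      ⟨s ++ [a], by
        simp only [List.append_assoc, List.cons_append, List.nil_append] at hst ⊢
        exact hst⟩
    have hm1 : [m] <:+ q1 ++ [m] := ⟨q1, rfl⟩
    obtain ⟨r, hr⟩ := List.suffix_of_suffix_length_le hm1 hsuf (by simp)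
    have hmem : m ∈ c :: t := by
      match r, hr with
      | [], hr => simp at hr
      | x :: r', hr =>
        have hx : r' ++ [m] = c :: t := by
          have hxx : x :: (r' ++ [m]) = m :: c :: t := by simpa using hr
          injection hxx
        rw [← hx]; simp
    have hsub : (m :: c :: t).Sublist (q1 ++ [m] ++ q2) :=
      (List.IsSuffix.sublist hsuf).trans
        (List.IsPrefix.sublist ⟨q2, rfl⟩)
    have hnd' := hnd.sublist hsub
    rw [List.nodup_cons] at hnd'
    exact hnd'.1 hmem
  · exfalso
    obtain ⟨s, t, hst⟩ := h'
    apply hmq2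
    match s, hst with
    | [], hst =>
      have hxx : a :: m :: c :: t = m :: q2 := by simpa using hst
      have h2 : m :: c :: t = q2 := by injection hxx
      rw [← h2]; simp
    | x :: s', hst =>
      have hxx : x :: (s' ++ a :: m :: c :: t) = m :: q2 := by simpa using hst
      have h2 : s' ++ a :: m :: c :: t = q2 := by injection hxx
      rw [← h2]; simp
  · constructor
    · rw [hq1]; exact List.getLast?_concat
    · rw [hq2]; rfl

lemma no2cycle {E : V → V → Prop} (h : AcyclicRel E) {x y : V}
    (h1 : E x y) (h2 : E y x) : False :=
  h x ((Relation.TransGen.single h1).tail h2)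

end AuxConcat

/-- Concatenating two d-connected paths sharing only the node `m` yields a
d-connected path, provided `m` is a mediator or confounder not in `Z`, or a
collider with a descendant in `Z`, in the concatenated path. -/
theorem concat_dConnected {V : Type} [Fintype V] (E : V → V → Prop)
    (hacyc : AcyclicRel E) (Z : Set V) (u m v : V) (q1 q2 : List V)
    (h1 : UPathFrom E u m (q1 ++ [m])) (hd1 : DConnPath E Z (q1 ++ [m]))
    (h2 : UPathFrom E m v (m :: q2)) (hd2 : DConnPath E Z (m :: q2))
    (hdisj : ∀ x ∈ q1, x ∉ q2)
    (hm : (Mediator E (q1 ++ [m] ++ q2) m ∧ m ∉ Z) ∨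
          (Confounder E (q1 ++ [m] ++ q2) m ∧ m ∉ Z) ∨
          (Collider E (q1 ++ [m] ++ q2) m ∧ ∃ d ∈ Z, Descendant E m d)) :
    UPathFrom E u v (q1 ++ [m] ++ q2) ∧ DConnPath E Z (q1 ++ [m] ++ q2) := by
  obtain ⟨⟨hc1, hn1⟩, hh1, hl1, hlen1⟩ := h1
  obtain ⟨⟨hc2, hn2⟩, hh2, hl2, hlen2⟩ := h2
  have hq1ne : q1 ≠ [] := by intro h; subst h; simp at hlen1
  have hq2ne : q2 ≠ [] := by intro h; subst h; simp at hlen2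
  have hmq2 : m ∉ q2 := (List.nodup_cons.1 hn2).1
  have hnd : (q1 ++ [m] ++ q2).Nodup := by
    rw [List.nodup_append]
    refine ⟨hn1, (List.nodup_cons.1 hn2).2, ?_⟩
    intro x hx y hx2 hxy; subst hxy
    rcases List.mem_append.1 hx with hx | hx
    · exact hdisj x hx hx2
    · simp at hx; subst hx; exact hmq2 hx2
  have hcc : (q1 ++ [m] ++ q2).Chain' (fun a b => E a b ∨ E b a) := by
    show List.IsChain _ _
    rw [List.isChain_append]
    refine ⟨hc1, (List.isChain_cons.1 hc2).2, ?_⟩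
    intro x hx y hy
    rw [List.getLast?_concat] at hx
    simp only [Option.mem_def, Option.some.injEq] at hx
    subst hx
    exact (List.isChain_cons.1 hc2).1 y hy
  have hup : UPathFrom E u v (q1 ++ [m] ++ q2) := by
    refine ⟨⟨hcc, hnd⟩, ?_, ?_, ?_⟩
    · rw [List.head?_append_of_ne_nil _ (by simp)]
      exact hh1
    · rw [List.getLast?_append_of_ne_nil _ hq2ne]
      rw [show m :: q2 = [m] ++ q2 from rfl, List.getLast?_append_of_ne_nil _ hq2ne] at hl2
      exact hl2
    · have hq1l : 1 ≤ q1.length := List.length_pos_iff.2 hq1ne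
      simp only [List.length_append, List.length_cons, List.length_nil]
      omega
  have ident : ∀ {a c a' c' : V}, q1.getLast? = some a → q2.head? = some c →
      [a', m, c'] <:+: (q1 ++ [m] ++ q2) → a' = a ∧ c' = c := by
    intro a c a' c' ha hc hin'
    obtain ⟨ha', hc'⟩ := junction_eq hnd hin'
    rw [ha] at ha'; rw [hc] at hc'
    exact ⟨(Option.some.inj ha').symm, (Option.some.inj hc').symm⟩
  refine ⟨hup, ?_, ?_, ?_⟩
  · -- mediators
    intro b hb
    obtain ⟨a, c, hin, hedge⟩ := hb
    rcases triple_split q1 q2 m a b c hin with h' | h' | ⟨hb', s, t, hq1e, hq2e⟩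
    · exact hd1.1 b ⟨a, c, h', hedge⟩
    · exact hd2.1 b ⟨a, c, h', hedge⟩
    · subst hb'
      obtain ⟨ha, hc⟩ := junction_eq hnd hin
      rcases hm with ⟨_, hz⟩ | ⟨_, hz⟩ | ⟨⟨a', c', hin', he'⟩, _⟩
      · exact hz
      · exact hz
      · exfalso
        obtain ⟨rfl, rfl⟩ := ident ha hc hin'
        rcases hedge with ⟨_, hmc⟩ | ⟨hma, _⟩
        · exact no2cycle hacyc hmc he'.2
        · exact no2cycle hacyc hma he'.1
  · -- confounders
    intro b hb
    obtain ⟨a, c, hin, hedge⟩ := hb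
    rcases triple_split q1 q2 m a b c hin with h' | h' | ⟨hb', s, t, hq1e, hq2e⟩
    · exact hd1.2.1 b ⟨a, c, h', hedge⟩
    · exact hd2.2.1 b ⟨a, c, h', hedge⟩
    · subst hb'
      obtain ⟨ha, hc⟩ := junction_eq hnd hin
      rcases hm with ⟨_, hz⟩ | ⟨_, hz⟩ | ⟨⟨a', c', hin', he'⟩, _⟩
      · exact hz
      · exact hz
      · exfalso
        obtain ⟨rfl, rfl⟩ := ident ha hc hin'
        exact no2cycle hacyc hedge.1 he'.1
  · -- colliders
    intro b hb
    obtain ⟨a, c, hin, hedge⟩ := hb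
    rcases triple_split q1 q2 m a b c hin with h' | h' | ⟨hb', s, t, hq1e, hq2e⟩
    · exact hd1.2.2 b ⟨a, c, h', hedge⟩
    · exact hd2.2.2 b ⟨a, c, h', hedge⟩
    · subst hb'
      obtain ⟨ha, hc⟩ := junction_eq hnd hin
      rcases hm with ⟨⟨a', c', hin', he'⟩, _⟩ | ⟨⟨a', c', hin', he'⟩, _⟩ | ⟨_, hdz⟩
      · exfalso
        obtain ⟨rfl, rfl⟩ := ident ha hc hin'
        rcases he' with ⟨_, hmc⟩ | ⟨hma, _⟩
        · exact no2cycle hacyc hmc hedge.2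
        · exact no2cycle hacyc hma hedge.1
      · exfalso
        obtain ⟨rfl, rfl⟩ := ident ha hc hin'
        exact no2cycle hacyc he'.1 hedge.1
      · exact hdz
end

section
/- In a DAG G with conditioning set Z, define w to be an unblocked ancestor of u if w = u, or there is a directed path from w to u such that neither w nor any internal node of the path lies in Z. If two distinct nodes w1 and w2 (with w1, w2 ∉ Z) share an unblocked ancestor a, then w1 and w2 are d-connected given Z; specifically, either there is an acyclic directed path from w1 to w2 avoiding Z internally, or one from w2 to w1 avoiding Z internally, or there is an acyclic path consisting of two directed paths from a common node a' ∉ Z to w1 and to w2 whose internal nodes avoid Z. -/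
section Helpers

open List Relation

variable {V : Type} {E : V → V → Prop} {Z : Set V}

lemma mediator_mem {l : List V} {b : V} (h : Mediator E l b) : b ∈ l := by
  obtain ⟨a, c, hinf, -⟩ := h; exact hinf.subset (by simp)

lemma confounder_mem {l : List V} {b : V} (h : Confounder E l b) : b ∈ l := by
  obtain ⟨a, c, hinf, -⟩ := h; exact hinf.subset (by simp)

lemma collider_reverse {l : List V} {b : V} (h : Collider E l.reverse b) : Collider E l b := by
  obtain ⟨a, c, hinf, h1, h2⟩ := h
  refine ⟨c, a, ?_, h2, h1⟩
  have : ([c, b, a].reverse : List V) <:+: l.reverse := by simpa using hinf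
  exact List.reverse_infix.1 this

lemma mediator_reverse {l : List V} {b : V} (h : Mediator E l.reverse b) : Mediator E l b := by
  obtain ⟨a, c, hinf, hd⟩ := h
  refine ⟨c, a, ?_, by tauto⟩
  have : ([c, b, a].reverse : List V) <:+: l.reverse := by simpa using hinf
  exact List.reverse_infix.1 this

lemma confounder_reverse {l : List V} {b : V} (h : Confounder E l.reverse b) : Confounder E l b := by
  obtain ⟨a, c, hinf, h1, h2⟩ := h
  refine ⟨c, a, ?_, h2, h1⟩
  have : ([c, b, a].reverse : List V) <:+: l.reverse := by simpa using hinf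
  exact List.reverse_infix.1 this

lemma dConnPath_reverse {l : List V} (h : DConnPath E Z l) : DConnPath E Z l.reverse :=
  ⟨fun b hm => h.1 b (mediator_reverse hm), fun b hc => h.2.1 b (confounder_reverse hc),
   fun b hc => h.2.2 b (collider_reverse hc)⟩

lemma no_collider_chain (hacyc : AcyclicRel E) {l : List V} (hl : l.Chain' E)
    {b : V} (h : Collider E l b) : False := by
  obtain ⟨x, c, hinf, hxb, hcb⟩ := h
  have h3 : ([x, b, c] : List V).Chain' E := hl.infix hinf
  simp only [List.Chain', List.isChain_cons_cons] at h3
  exact hacyc b (TransGen.head h3.2.1 (TransGen.single hcb))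

lemma dConnPath_of_chain (hacyc : AcyclicRel E) {l : List V} (hl : l.Chain' E)
    (hZ : ∀ x ∈ l, x ∉ Z) : DConnPath E Z l :=
  ⟨fun b hm => hZ b (mediator_mem hm), fun b hc => hZ b (confounder_mem hc),
   fun b hc => absurd hc (fun hc => no_collider_chain hacyc hl hc)⟩
open List Relation

variable {V : Type} {E : V → V → Prop} {Z : Set V}

lemma transGen_of_chain' : ∀ {l : List V} {a b : V}, (a :: l).Chain' E → b ∈ l → TransGen E a b
  | [], _, _, _, hb => absurd hb (by simp)
  | c :: l, a, b, h, hb => by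
    simp only [List.Chain', List.isChain_cons_cons] at h
    rcases List.mem_cons.1 hb with rfl | hb
    · exact TransGen.single h.1
    · exact TransGen.head h.1 (transGen_of_chain' h.2 hb)

lemma nodup_of_chain' (hacyc : ∀ v, ¬ TransGen E v v) :
    ∀ {l : List V}, l.Chain' E → l.Nodup
  | [], _ => List.nodup_nil
  | a :: l, h => by
    refine List.nodup_cons.2 ⟨fun ha => hacyc a (transGen_of_chain' h ha), nodup_of_chain' hacyc h.tail⟩

lemma mem_dropLast_or_getLast {l : List V} {x : V} (hx : x ∈ l) :
    x ∈ l.dropLast ∨ l.getLast? = some x := by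
  have hne : l ≠ [] := List.ne_nil_of_mem hx
  have := List.dropLast_append_getLast hne
  rw [← this] at hx
  rcases List.mem_append.1 hx with h | h
  · exact Or.inl h
  · right; simp at h; rw [List.getLast?_eq_getLast hne, h]

lemma suffix_getLast? {s l : List V} (h : s <:+ l) (hs : s ≠ []) : l.getLast? = s.getLast? := by
  obtain ⟨t, rfl⟩ := h
  exact List.getLast?_append_of_ne_nil t hs

lemma exists_good_suffix (P : V → Prop) :
    ∀ l : List V, (∃ x ∈ l, P x) →
      ∃ a s', (a :: s') <:+ l ∧ P a ∧ ∀ z ∈ s', ¬ P z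
  | [], h => by simp at h
  | hd :: tl, h => by
    by_cases h' : ∃ x ∈ tl, P x
    · obtain ⟨a, s', hs, hp, hz⟩ := exists_good_suffix P tl h'
      exact ⟨a, s', hs.trans (List.suffix_cons hd tl), hp, hz⟩
    · push_neg at h'
      obtain ⟨x, hx, hpx⟩ := h
      rcases List.mem_cons.1 hx with rfl | hx
      · exact ⟨x, tl, List.suffix_refl _, hpx, h'⟩
      · exact absurd hpx (h' x hx)

lemma exists_suffix_head : ∀ {l : List V} {x : V}, x ∈ l → ∃ s', (x :: s') <:+ l
  | [], _, h => absurd h (by simp)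
  | a :: l, x, h => by
    rcases List.mem_cons.1 h with rfl | h
    · exact ⟨l, List.suffix_refl _⟩
    · obtain ⟨s', hs⟩ := exists_suffix_head h
      exact ⟨s', hs.trans (List.suffix_cons a l)⟩

lemma prefix_append_cases : ∀ (u : List V) {t v : List V}, t <+: u ++ v →
    t <+: u ∨ ∃ t2, t = u ++ t2 ∧ t2 <+: v
  | [], t, v, h => Or.inr ⟨t, rfl, h⟩
  | a :: u, t, v, h => by
    cases t with
    | nil => exact Or.inl (List.nil_prefix)
    | cons x t =>
      rw [List.cons_append, List.cons_prefix_cons] at h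
      obtain ⟨rfl, h⟩ := h
      rcases prefix_append_cases u h with h | ⟨t2, rfl, ht2⟩
      · exact Or.inl (List.cons_prefix_cons.2 ⟨rfl, h⟩)
      · exact Or.inr ⟨t2, rfl, ht2⟩

lemma infix_append_cases : ∀ (u : List V) {t v : List V}, t <:+: u ++ v →
    t <:+: u ∨ t <:+: v ∨ ∃ t1 t2, t = t1 ++ t2 ∧ t1 ≠ [] ∧ t1 <:+ u ∧ t2 <+: v
  | [], t, v, h => Or.inr (Or.inl h)
  | a :: u, t, v, h => by
    rw [List.cons_append, List.infix_cons_iff] at h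
    rcases h with h | h
    · rcases prefix_append_cases (a :: u) h with h | ⟨t2, rfl, ht2⟩
      · exact Or.inl h.isInfix
      · exact Or.inr (Or.inr ⟨a :: u, t2, rfl, by simp, List.suffix_refl _, ht2⟩)
    · rcases infix_append_cases u h with h | h | ⟨t1, t2, rfl, h1, h2, h3⟩
      · exact Or.inl (h.trans (List.infix_cons (List.infix_refl u)))
      · exact Or.inr (Or.inl h)
      · exact Or.inr (Or.inr ⟨t1, t2, rfl, h1, h2.trans (List.suffix_cons a u), h3⟩)

lemma no_collider_fork (hacyc : AcyclicRel E) {s t : List V} (hs : s.Chain' E) (ht : t.Chain' E)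
    {b : V} (h : Collider E (s.reverse ++ t) b) : False := by
  obtain ⟨x, c, hinf, hxb, hcb⟩ := h
  have cyc1 : E b x → False := fun h' => hacyc x (TransGen.head hxb (TransGen.single h'))
  have cyc2 : E b c → False := fun h' => hacyc b (TransGen.head h' (TransGen.single hcb))
  have revcase : ([x, b, c] : List V) <:+: s.reverse → False := by
    intro h
    have h' : ([c, b, x] : List V) <:+: s := List.reverse_infix.1 (by simpa using h)
    have := hs.infix h'
    rw [List.isChain_cons_cons, List.isChain_cons_cons] at this
    exact cyc1 this.2.1
  rcases infix_append_cases _ hinf with h | h | ⟨t1, t2', heq, hne, hsuf, hpre⟩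
  · exact revcase h
  · have := ht.infix h
    rw [List.isChain_cons_cons, List.isChain_cons_cons] at this
    exact cyc2 this.2.1
  · rcases t1 with _ | ⟨a1, _ | ⟨a2, _ | ⟨a3, rest⟩⟩⟩
    · exact hne rfl
    · obtain ⟨rfl, ht2'⟩ : a1 = x ∧ t2' = [b, c] := by
        have := heq.symm; simpa using this
      subst ht2'
      have := ht.prefix hpre
      rw [List.isChain_cons_cons] at this
      exact cyc2 this.1
    · obtain ⟨e1, e2, e3⟩ : x = a1 ∧ b = a2 ∧ [c] = t2' := by simpa using heq
      subst e1; subst e2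
      have h' : ([b, x] : List V) <:+: s := List.reverse_infix.1 (by simpa using hsuf.isInfix)
      have := hs.infix h'
      rw [List.isChain_cons_cons] at this
      exact cyc1 this.1
    · obtain ⟨e1, e2, e3⟩ : x = a1 ∧ b = a2 ∧ [c] = a3 :: (rest ++ t2') := by simpa using heq
      obtain ⟨e4, e5⟩ : c = a3 ∧ ([] : List V) = rest ++ t2' := by simpa using e3
      obtain ⟨e6, e7⟩ := List.append_eq_nil_iff.1 e5.symm
      subst e1; subst e2; subst e4; subst e6
      exact revcase (by simpa using hsuf.isInfix)

end Helpers

/-- Two distinct nodes not in `Z` sharing an unblocked ancestor are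
d-connected given `Z`, via a directed path one way or the other avoiding `Z`
internally, or via a single-confounder path. -/
theorem shared_unblocked_ancestor_dConnected {V : Type} [Fintype V]
    (E : V → V → Prop) (hacyc : AcyclicRel E) (Z : Set V)
    (w1 w2 a : V) (hne : w1 ≠ w2) (hw1 : w1 ∉ Z) (hw2 : w2 ∉ Z)
    (ha1 : UnblockedAnc E Z a w1) (ha2 : UnblockedAnc E Z a w2) :
    DConnected E Z w1 w2 ∧
    ((∃ l, DirPathFrom E w1 w2 l ∧ ∀ x ∈ l.tail.dropLast, x ∉ Z) ∨
     (∃ l, DirPathFrom E w2 w1 l ∧ ∀ x ∈ l.tail.dropLast, x ∉ Z) ∨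
     (∃ (a' : V) (m1 m2 : List V), a' ∉ Z ∧
        DirPathFrom E a' w1 (a' :: (m1 ++ [w1])) ∧
        DirPathFrom E a' w2 (a' :: (m2 ++ [w2])) ∧
        (∀ x ∈ m1, x ∉ Z) ∧ (∀ x ∈ m2, x ∉ Z) ∧
        ((w1 :: m1.reverse) ++ a' :: (m2 ++ [w2])).Nodup)) := by
  have key : ∀ w : V, w ∉ Z → UnblockedAnc E Z a w →
      ∃ l : List V, l.Chain' E ∧ l.head? = some a ∧ l.getLast? = some w ∧ ∀ x ∈ l, x ∉ Z := by
    intro w hw haw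
    rcases haw with rfl | ⟨l, hc, hh, hl, hz⟩
    · exact ⟨[a], List.isChain_singleton a, rfl, rfl, by simpa using hw⟩
    · refine ⟨l, hc, hh, hl, fun x hx => ?_⟩
      rcases mem_dropLast_or_getLast hx with h | h
      · exact hz x h
      · rw [hl] at h; injection h with h; exact h ▸ hw
  obtain ⟨l1, hc1, hh1, hl1, hz1⟩ := key w1 hw1 ha1
  obtain ⟨l2, hc2, hh2, hl2, hz2⟩ := key w2 hw2 ha2
  have hal1 : a ∈ l1 := List.mem_of_mem_head? (hh1 ▸ rfl)
  have hal2 : a ∈ l2 := List.mem_of_mem_head? (hh2 ▸ rfl)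
  obtain ⟨a', t1, hsuf1, ha'l2, ht1⟩ := exists_good_suffix (· ∈ l2) l1 ⟨a, hal1, hal2⟩
  obtain ⟨t2, hsuf2⟩ := exists_suffix_head ha'l2
  have hcs1 : (a' :: t1).Chain' E := hc1.suffix hsuf1
  have hcs2 : (a' :: t2).Chain' E := hc2.suffix hsuf2
  have hnd1 := nodup_of_chain' hacyc hcs1
  have hnd2 := nodup_of_chain' hacyc hcs2
  have hlast1 : (a' :: t1).getLast? = some w1 := (suffix_getLast? hsuf1 (by simp)).symm.trans hl1
  have hlast2 : (a' :: t2).getLast? = some w2 := (suffix_getLast? hsuf2 (by simp)).symm.trans hl2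
  have hz1' : ∀ x ∈ a' :: t1, x ∉ Z := fun x hx => hz1 x (hsuf1.subset hx)
  have hz2' : ∀ x ∈ a' :: t2, x ∉ Z := fun x hx => hz2 x (hsuf2.subset hx)
  by_cases h1 : t1 = []
  · -- a' = w1 : directed path w1 → w2
    subst h1
    have haw1 : a' = w1 := by simpa using hlast1
    subst haw1
    have hne2 : t2 ≠ [] := by
      intro h; subst h; exact hne (by simpa using hlast2)
    constructor
    · refine ⟨a' :: t2, ⟨⟨hcs2.imp (fun _ _ h => Or.inl h), hnd2⟩, rfl, hlast2, ?_⟩,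
        dConnPath_of_chain hacyc hcs2 hz2'⟩
      cases t2 with
      | nil => exact absurd rfl hne2
      | cons c r => simp
    · exact Or.inl ⟨a' :: t2, ⟨hcs2, hnd2, rfl, hlast2⟩,
        fun x hx => hz2' x (List.mem_cons_of_mem _ (List.dropLast_subset _ hx))⟩
  by_cases h2 : t2 = []
  · -- a' = w2 : directed path w2 → w1
    subst h2
    have haw2 : a' = w2 := by simpa using hlast2
    subst haw2
    have hne1 : t1 ≠ [] := h1
    constructor
    · refine ⟨(a' :: t1).reverse,
        ⟨⟨List.isChain_reverse.2 (hcs1.imp (fun _ _ h => Or.inr h)), List.nodup_reverse.2 hnd1⟩,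
          ?_, ?_, ?_⟩, dConnPath_reverse (dConnPath_of_chain hacyc hcs1 hz1')⟩
      · rw [List.head?_reverse, hlast1]
      · rw [List.getLast?_reverse]; rfl
      · cases t1 with
        | nil => exact absurd rfl hne1
        | cons c r => simp
    · exact Or.inr (Or.inl ⟨a' :: t1, ⟨hcs1, hnd1, rfl, hlast1⟩,
        fun x hx => hz1' x (List.mem_cons_of_mem _ (List.dropLast_subset _ hx))⟩)
  · -- fork case
    have hlt1 : t1.getLast? = some w1 := (suffix_getLast? (List.suffix_cons a' t1) h1).symm.trans hlast1
    have hlt2 : t2.getLast? = some w2 := (suffix_getLast? (List.suffix_cons a' t2) h2).symm.trans hlast2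
    have e1 : t1.dropLast ++ [w1] = t1 := List.dropLast_append_getLast? w1 hlt1
    have e2 : t2.dropLast ++ [w2] = t2 := List.dropLast_append_getLast? w2 hlt2
    set m1 := t1.dropLast with hm1
    set m2 := t2.dropLast with hm2
    have ht2sub : t2 ⊆ l2 := fun x hx => hsuf2.subset (List.mem_cons_of_mem _ hx)
    have hdisj : List.Disjoint (a' :: t1).reverse t2 := by
      intro x hx hx2
      rw [List.mem_reverse] at hx
      rcases List.mem_cons.1 hx with rfl | hx
      · exact (List.nodup_cons.1 hnd2).1 hx2
      · exact ht1 x hx (ht2sub hx2)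
    have keyp : (w1 :: m1.reverse) ++ a' :: (m2 ++ [w2]) = (a' :: t1).reverse ++ t2 := by
      rw [← e1, ← e2]; simp
    have ha'Z : a' ∉ Z := hz2 a' ha'l2
    have hd1 : DirPathFrom E a' w1 (a' :: (m1 ++ [w1])) := by
      rw [e1]; exact ⟨hcs1, hnd1, rfl, hlast1⟩
    have hd2 : DirPathFrom E a' w2 (a' :: (m2 ++ [w2])) := by
      rw [e2]; exact ⟨hcs2, hnd2, rfl, hlast2⟩
    have hm1Z : ∀ x ∈ m1, x ∉ Z := fun x hx =>
      hz1' x (List.mem_cons_of_mem _ (List.dropLast_subset _ hx))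
    have hm2Z : ∀ x ∈ m2, x ∉ Z := fun x hx =>
      hz2' x (List.mem_cons_of_mem _ (List.dropLast_subset _ hx))
    have hpnd : ((w1 :: m1.reverse) ++ a' :: (m2 ++ [w2])).Nodup := by
      rw [keyp]
      exact (List.nodup_reverse.2 hnd1).append (hnd2.of_cons) hdisj
    constructor
    · -- DConnected via the fork path
      refine ⟨(w1 :: m1.reverse) ++ a' :: (m2 ++ [w2]), ⟨⟨?_, hpnd⟩, ?_, ?_, ?_⟩, ?_, ?_, ?_⟩
      · rw [keyp]
        refine List.IsChain.append (List.isChain_reverse.2 (hcs1.imp (fun _ _ h => Or.inr h)))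
          ((hcs2.tail).imp (fun _ _ h => Or.inl h)) ?_
        intro x hx y hy
        rw [List.getLast?_reverse] at hx
        simp at hx
        subst hx
        cases t2 with
        | nil => exact absurd rfl h2
        | cons c r =>
          simp at hy; subst hy
          exact Or.inl (List.isChain_cons_cons.1 hcs2).1
      · simp
      · have : ([w2] : List V) <:+ (w1 :: m1.reverse) ++ a' :: (m2 ++ [w2]) :=
          ⟨(w1 :: m1.reverse) ++ a' :: m2, by simp⟩
        rw [suffix_getLast? this (by simp)]; rfl
      · simp only [List.length_append, List.length_cons, List.length_reverse]
        omega
      · intro b hm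
        have hb := mediator_mem hm
        rw [keyp] at hb
        rcases List.mem_append.1 hb with hb | hb
        · exact hz1' b (List.mem_reverse.1 hb)
        · exact hz2' b (List.mem_cons_of_mem _ hb)
      · intro b hm
        have hb := confounder_mem hm
        rw [keyp] at hb
        rcases List.mem_append.1 hb with hb | hb
        · exact hz1' b (List.mem_reverse.1 hb)
        · exact hz2' b (List.mem_cons_of_mem _ hb)
      · intro b hc
        rw [keyp] at hc
        exact absurd hc (fun hc => no_collider_fork hacyc hcs1 hcs2.tail hc)
    · exact Or.inr (Or.inr ⟨a', m1, m2, ha'Z, hd1, hd2, hm1Z, hm2Z, hpnd⟩)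
end

section
/- Let G be a DAG with a function f assigning each node a value computed from its parents' values and a per-node exogenous term, so that the value of each node is determined recursively (well-defined by acyclicity). Let Z ⊆ V and let U, U' be two exogenous-term assignments such that under both, every node z ∈ Z evaluates to a prescribed fixed value A_Z(z). If a node w evaluates differently under U than under U' (i.e., f_U(w) ≠ f_{U'}(w)), then there exists an unblocked ancestor a of w given Z (a = w, or a directed path from a to w with a ∉ Z and no internal node in Z) such that U(a) ≠ U'(a). -/
/-- If `w` evaluates differently under two exogenous assignments that both
properly condition on `Z`, then some unblocked ancestor of `w` given `Z` has a
differing exogenous term. -/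
theorem value_affected_by_unblocked {V X : Type} [Fintype V]
    (pa : V → List V) (hacyc : AcyclicRel (fun a b => a ∈ pa b))
    (Z : Set V) (AZ : V → X)
    (g : V → X → List X → X) (f : (V → X) → V → X)
    (hf : ∀ (U : V → X) (w : V), f U w = g w (U w) ((pa w).map (f U)))
    (U U' : V → X)
    (hU : ∀ z ∈ Z, f U z = AZ z) (hU' : ∀ z ∈ Z, f U' z = AZ z)
    (w : V) (hw : f U w ≠ f U' w) :
    ∃ a, UnblockedAnc (fun a b => a ∈ pa b) Z a w ∧ U a ≠ U' a := by
  classical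
  set R := (fun a b => a ∈ pa b) with hR
  have hwf : WellFounded (Relation.TransGen R) := by
    haveI : IsTrans V (Relation.TransGen R) := ⟨fun _ _ _ => Relation.TransGen.trans⟩
    haveI : IsIrrefl V (Relation.TransGen R) := ⟨hacyc⟩
    exact Finite.wellFounded_of_trans_of_irrefl _
  suffices H : ∀ w, f U w ≠ f U' w → ∃ a, UnblockedAnc R Z a w ∧ U a ≠ U' a from H w hw
  intro w
  induction w using hwf.induction with
  | _ w IH =>
    intro hw
    by_cases hUw : U w = U' w
    · -- some parent differs
      have hpar : ∃ p ∈ pa w, f U p ≠ f U' p := by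
        by_contra hc
        push_neg at hc
        apply hw
        rw [hf U w, hf U' w, hUw]
        congr 1
        exact List.map_congr_left hc
      obtain ⟨p, hp, hfp⟩ := hpar
      have hpZ : p ∉ Z := fun hz => hfp ((hU p hz).trans (hU' p hz).symm)
      obtain ⟨a, ha, hUa⟩ := IH p (Relation.TransGen.single hp) hfp
      refine ⟨a, ?_, hUa⟩
      rcases ha with rfl | ⟨l, hch, hhd, hlast, hZl⟩
      · exact Or.inr ⟨[a, w], List.isChain_pair.mpr hp, rfl, rfl, by
          intro x hx
          simp at hx
          subst hx
          exact hpZ⟩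
      · have hne : l ≠ [] := by rintro rfl; simp at hhd
        refine Or.inr ⟨l ++ [w], ?_, ?_, ?_, ?_⟩
        · apply List.isChain_append.mpr
          refine ⟨hch, List.isChain_singleton w, ?_⟩
          intro x hx y hy
          simp at hy
          subst hy
          rw [hlast] at hx
          simp at hx
          subst hx
          exact hp
        · rw [List.head?_append_of_ne_nil _ hne]; exact hhd
        · simp
        · rw [List.dropLast_concat]
          intro x hx
          have hsplit : x ∈ l.dropLast ∨ x = l.getLast hne := by
            have hdec : l.dropLast ++ [l.getLast hne] = l := List.dropLast_append_getLast hne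
            rw [← hdec] at hx
            simpa using hx
          rcases hsplit with h | h
          · exact hZl x h
          · subst h
            have : l.getLast hne = p := by
              have := List.getLast?_eq_getLast hne
              rw [hlast] at this
              exact (Option.some_injective _ this).symm
            rw [this]
            exact hpZ
    · exact ⟨w, Or.inl rfl, hUw⟩
end

section
/- Let P be an acyclic undirected path from u to v in a DAG that is d-connected given Z, and let S1 be the set of 'source' nodes on P: nodes of P with no path-adjacent parent (i.e., both path edges adjacent to the node, or the single adjacent edge for an endpoint, point away from it). Then the first source node along P (in order from u) is an unblocked ancestor of u given Z. -/
private lemma aux_chain {V : Type} (E : V → V → Prop) (L : List V) (s : V) (l2 : List V)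
    (hch : L.Chain' (fun a b => E a b ∨ E b a)) :
    ∀ (m r : List V) (a b : V), L = r ++ a :: b :: (m ++ s :: l2) → E b a →
    (∀ x ∈ b :: m, ¬ SourceOn E L x) →
    (b :: (m ++ [s])).Chain' (flip E) ∧ ∀ x ∈ b :: m, Mediator E L x := by
  intro m
  induction m with
  | nil =>
    intro r a b hL hba hns
    have hinf : [a, b, s] <:+: L := ⟨r, l2, by simp [hL]⟩
    have hRbs : E b s ∨ E s b := by
      have h := hch.infix hinf
      exact (List.isChain_cons_cons.mp h).2.rel_head
    have hsb : E s b := by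
      rcases hRbs with h | h
      · exact absurd (Or.inr (Or.inr ⟨a, s, hinf, hba, h⟩)) (hns b (by simp))
      · exact h
    refine ⟨?_, ?_⟩
    · simpa [List.Chain', List.isChain_cons_cons, flip] using hsb
    · intro x hx
      simp only [List.mem_singleton] at hx
      subst hx
      exact ⟨a, s, hinf, Or.inr ⟨hba, hsb⟩⟩
  | cons c m' ih =>
    intro r a b hL hba hns
    have hinf : [a, b, c] <:+: L := ⟨r, m' ++ s :: l2, by simp [hL]⟩
    have hRbc : E b c ∨ E c b := by
      have h := hch.infix hinf
      exact (List.isChain_cons_cons.mp h).2.rel_head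
    have hcb : E c b := by
      rcases hRbc with h | h
      · exact absurd (Or.inr (Or.inr ⟨a, c, hinf, hba, h⟩)) (hns b (by simp))
      · exact h
    have ih' := ih (r ++ [a]) b c (by simp [hL]) hcb
      (fun x hx => hns x (by simp only [List.mem_cons] at hx ⊢; tauto))
    refine ⟨List.isChain_cons_cons.mpr ⟨hcb, ih'.1⟩, ?_⟩
    intro x hx
    rcases List.mem_cons.mp hx with rfl | hx
    · exact ⟨a, c, hinf, Or.inr ⟨hba, hcb⟩⟩
    · exact ih'.2 x hx

/-- On an acyclic undirected d-connected path from `u` to `v`, the first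
source node (in order from `u`) is an unblocked ancestor of `u` given `Z`. -/
theorem first_source_is_unblocked_ancestor {V : Type} [Fintype V]
    (E : V → V → Prop) (hacyc : AcyclicRel E) (Z : Set V) (u v : V)
    (hu : u ∉ Z) (hv : v ∉ Z) (l1 l2 : List V) (s : V)
    (hpath : UPathFrom E u v (l1 ++ s :: l2))
    (hconn : DConnPath E Z (l1 ++ s :: l2))
    (hs : SourceOn E (l1 ++ s :: l2) s)
    (hfirst : ∀ x ∈ l1, ¬ SourceOn E (l1 ++ s :: l2) x) :
    UnblockedAnc E Z s u := by
  obtain ⟨⟨hch, hnd⟩, hhead, hlast, hlen⟩ := hpath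
  obtain ⟨hmed, hconf, _⟩ := hconn
  have hsZ : s ∉ Z := by
    rcases hs with ⟨b, hpre, _⟩ | ⟨b, hsuf, _⟩ | hc
    · -- s is the head of L, so s = u
      have : (l1 ++ s :: l2).head? = some s := by
        obtain ⟨t, ht⟩ := hpre
        rw [← ht]; rfl
      have : s = u := by rw [this] at hhead; exact Option.some_injective _ hhead
      exact this ▸ hu
    · -- s is the last of L, so s = v
      have : (l1 ++ s :: l2).getLast? = some s := by
        obtain ⟨t, ht⟩ := hsuf
        rw [← ht, show t ++ [b, s] = (t ++ [b]) ++ [s] by simp, List.getLast?_concat]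
      have : s = v := by rw [this] at hlast; exact Option.some_injective _ hlast
      exact this ▸ hv
    · exact hconf s hc
  cases l1 with
  | nil =>
    left
    simpa using hhead
  | cons a t =>
    have hau : a = u := by simpa using hhead
    subst hau
    cases t with
    | nil =>
      -- L = a :: s :: l2
      have hRas : E a s ∨ E s a := (List.isChain_cons_cons.mp hch).1
      have hsa : E s a := by
        rcases hRas with h | h
        · exact absurd (Or.inl ⟨s, ⟨l2, rfl⟩, h⟩) (hfirst a (by simp))
        · exact h
      right
      refine ⟨[s, a], ?_, rfl, rfl, ?_⟩
      · simpa [List.Chain', List.isChain_cons_cons] using hsa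
      · intro x hx
        simp only [List.dropLast, List.mem_singleton] at hx
        subst hx; exact hsZ
    | cons c t' =>
      -- L = a :: c :: t' ++ s :: l2
      have hRac : E a c ∨ E c a := (List.isChain_cons_cons.mp hch).1
      have hca : E c a := by
        rcases hRac with h | h
        · exact absurd (Or.inl ⟨c, ⟨t' ++ s :: l2, rfl⟩, h⟩) (hfirst a (by simp))
        · exact h
      have haux := aux_chain E (a :: c :: t' ++ s :: l2) s l2 hch t' [] a c rfl hca
        (fun x hx => hfirst x (by simp only [List.mem_cons] at hx ⊢; tauto))
      right
      refine ⟨(a :: c :: (t' ++ [s])).reverse, ?_, ?_, ?_, ?_⟩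
      · show List.IsChain _ _; rw [List.isChain_reverse]
        exact List.isChain_cons_cons.mpr ⟨hca, haux.1⟩
      · rw [List.head?_reverse,
          show a :: c :: (t' ++ [s]) = (a :: c :: t') ++ [s] by simp, List.getLast?_concat]
      · rw [List.getLast?_reverse]
        rfl
      · intro x hx
        have : (a :: c :: (t' ++ [s])).reverse = (c :: (t' ++ [s])).reverse ++ [a] := by
          simp
        rw [this, List.dropLast_concat, List.mem_reverse] at hx
        simp only [List.mem_cons, List.mem_append, List.mem_singleton] at hx
        rcases hx with rfl | hx | rfl | hx
        · exact hmed x (haux.2 x (by simp))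
        · exact hmed x (haux.2 x (by simp [hx]))
        · exact hsZ
        · exact absurd hx (List.not_mem_nil)
end

section
/- Let P be an acyclic undirected path in a DAG that is d-connected given Z. If x and y are two consecutive source nodes on P (confounders or source endpoints, with no source between them on P), then there exists z ∈ Z such that both x and y are unblocked ancestors of z given Z. -/
namespace CSaux

variable {V : Type} {E : V → V → Prop} {Z : Set V}

/-- RTG of the "unblocked step" relation gives an unblocked ancestor. -/
lemma rtg_unblocked {w z : V}
    (h : Relation.ReflTransGen (fun a b => E a b ∧ a ∉ Z) w z) :
    UnblockedAnc E Z w z := by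
  induction h using Relation.ReflTransGen.head_induction_on with
  | refl => exact Or.inl rfl
  | head hab _ ih =>
    obtain ⟨hE, hnz⟩ := hab
    rcases ih with rfl | ⟨L, hc, hh, hl, hz⟩
    · exact Or.inr ⟨[_, _], by simp [List.Chain', List.isChain_pair, hE], rfl, rfl, by simpa using hnz⟩
    · cases L with
      | nil => simp at hh
      | cons b0 L0 =>
        simp only [List.head?_cons, Option.some_inj] at hh
        subst hh
        refine Or.inr ⟨_ :: b0 :: L0, ?_, rfl, by rw [List.getLast?_cons_cons]; exact hl, ?_⟩
        · exact List.isChain_cons_cons.mpr ⟨hE, hc⟩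
        · intro t ht
          rw [List.dropLast_cons₂, List.mem_cons] at ht
          rcases ht with rfl | ht
          · exact hnz
          · exact hz t ht

/-- A directed chain whose non-final nodes avoid `Z` gives RTG of unblocked steps. -/
lemma chain_rtg : ∀ (L : List V) (a b : V), L.Chain' E → L.head? = some a →
    L.getLast? = some b → (∀ t ∈ L.dropLast, t ∉ Z) →
    Relation.ReflTransGen (fun p q => E p q ∧ p ∉ Z) a b := by
  intro L
  induction L with
  | nil => intro a b _ h; simp at h
  | cons a0 L0 ih =>
    intro a b hc hh hl hz
    simp only [List.head?_cons, Option.some_inj] at hh; subst hh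
    cases L0 with
    | nil => simp at hl; subst hl; exact Relation.ReflTransGen.refl
    | cons a1 L1 =>
      change List.IsChain _ _ at hc
      rw [List.isChain_cons_cons] at hc
      refine Relation.ReflTransGen.head ⟨hc.1, ?_⟩ (ih a1 b hc.2 rfl (by rwa [List.getLast?_cons_cons] at hl) ?_)
      · exact hz _ (by rw [List.dropLast_cons₂]; exact List.mem_cons_self)
      · intro t ht
        exact hz t (by rw [List.dropLast_cons₂]; exact List.mem_cons_of_mem _ ht)

/-- Truncate a descendant witness at the first conditioned node. -/
lemma desc_trunc {c z : V} (h : Relation.ReflTransGen E c z) (hz : z ∈ Z) :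
    ∃ z' ∈ Z, Relation.ReflTransGen (fun p q => E p q ∧ p ∉ Z) c z' := by
  induction h using Relation.ReflTransGen.head_induction_on with
  | refl => exact ⟨z, hz, Relation.ReflTransGen.refl⟩
  | @head a c' hE _ ih =>
    by_cases ha : a ∈ Z
    · exact ⟨a, ha, Relation.ReflTransGen.refl⟩
    · obtain ⟨z', hz', hr⟩ := ih
      exact ⟨z', hz', Relation.ReflTransGen.head ⟨hE, ha⟩ hr⟩

/-- Internal nodes of a chain satisfy any property implied by local triples. -/
lemma mid {D : V → V → Prop} {P : V → Prop} :
    ∀ (L : List V) (a : V), (a :: L).Chain' D →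
    (∀ p b q, [p, b, q] <:+: (a :: L) → D p b → D b q → P b) →
    ∀ w ∈ L.dropLast, P w := by
  intro L
  induction L with
  | nil => simp
  | cons b L' ih =>
    intro a hc hD w hw
    cases L' with
    | nil => simp at hw
    | cons c L'' =>
      rw [List.dropLast_cons₂, List.mem_cons] at hw
      change List.IsChain _ _ at hc
      rw [List.isChain_cons_cons] at hc
      rcases hw with rfl | hw
      · exact hD a w c ⟨[], L'', by simp⟩ hc.1 (List.isChain_cons_cons.mp hc.2).1
      · refine ih b hc.2 ?_ w hw
        intro p m q hinf hpm hmq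
        exact hD p m q (hinf.trans ⟨[a], [], by simp⟩) hpm hmq

/-- Splitting a nodup list at a fixed element is unique. -/
lemma nodup_split : ∀ (s : List V) (s' t t' : List V) (b : V),
    (s ++ b :: t).Nodup → s ++ b :: t = s' ++ b :: t' → s = s' ∧ t = t' := by
  intro s
  induction s with
  | nil =>
    intro s' t t' b hn he
    cases s' with
    | nil => simpa using he
    | cons h s'' =>
      simp only [List.nil_append, List.cons_append, List.cons.injEq] at he
      obtain ⟨rfl, he2⟩ := he
      exfalso
      have : b ∈ s'' ++ b :: t' := by simp
      rw [← he2] at this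
      exact (List.nodup_cons.mp hn).1 this
  | cons h s₂ ih =>
    intro s' t t' b hn he
    cases s' with
    | nil =>
      simp only [List.cons_append, List.nil_append, List.cons.injEq] at he
      obtain ⟨rfl, he2⟩ := he
      exfalso
      have : h ∈ s₂ ++ h :: t := by simp
      rw [List.cons_append, List.nodup_cons] at hn
      exact hn.1 this
    | cons h' s₂' =>
      simp only [List.cons_append, List.cons.injEq] at he
      obtain ⟨rfl, he2⟩ := he
      rw [List.cons_append, List.nodup_cons] at hn
      obtain ⟨rfl, rfl⟩ := ih s₂' t t' b hn.2 he2
      exact ⟨rfl, rfl⟩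

lemma head?_append_cons (A : List V) (b : V) (C : List V) :
    (A ++ b :: C).head? = (A ++ [b]).head? := by cases A <;> simp

/-- Once the path direction points backward, it stays backward (no confounders). -/
lemma bwd : ∀ (t : List V) (w b : V),
    (w :: (t ++ [b])).Chain' (fun p q => E p q ∨ E q p) →
    (∀ h, (t ++ [b]).head? = some h → E h w) →
    (∀ p m q, [p, m, q] <:+: (w :: (t ++ [b])) → ¬(E m p ∧ E m q)) →
    (b :: (t.reverse ++ [w])).Chain' E := by
  intro t
  induction t with
  | nil =>
    intro w b _ hh _
    simpa [List.Chain', List.isChain_pair] using hh b rfl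
  | cons c' t'' ih =>
    intro w b hc hh hnc
    have hEc'w : E c' w := hh c' (by simp)
    rw [List.cons_append] at hc
    change List.IsChain _ _ at hc
    rw [List.isChain_cons_cons] at hc
    obtain ⟨h', rest, hsplit⟩ : ∃ h' rest, t'' ++ [b] = h' :: rest := by
      cases t'' <;> exact ⟨_, _, rfl⟩
    have hU : E c' h' ∨ E h' c' := by
      have := (List.isChain_cons.mp hc.2).1
      rw [hsplit] at this
      exact this h' rfl
    have hEh'c' : E h' c' := by
      rcases hU with h | h
      · exact absurd ⟨hEc'w, h⟩ (hnc w c' h' ⟨[], rest, by simp [hsplit]⟩)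
      · exact h
    have hrec := ih c' b hc.2 (fun g hg => by rw [hsplit] at hg; cases hg; exact hEh'c')
      (fun p m q hinf => hnc p m q (hinf.trans ⟨[w], [], by simp⟩))
    have : b :: ((c' :: t'').reverse ++ [w]) = (b :: (t''.reverse ++ [c'])) ++ [w] := by simp
    change List.IsChain _ _
    rw [this, List.isChain_append]
    refine ⟨hrec, List.isChain_singleton _, ?_⟩
    intro p hp q hq
    rw [List.head?_cons] at hq; cases hq
    have : (b :: (t''.reverse ++ [c'])).getLast? = some c' := by
      rw [show b :: (t''.reverse ++ [c']) = (b :: t''.reverse) ++ [c'] by simp,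
        List.getLast?_concat]
    rw [this] at hp; cases hp
    exact hEc'w

/-- On a segment between two sources with no source inside, there is a unique
collider with directed chains from both ends. -/
lemma fwd (hacyc : AcyclicRel E) : ∀ (t : List V) (a b : V),
    (a :: (t ++ [b])).Chain' (fun p q => E p q ∨ E q p) →
    (∀ h, (t ++ [b]).head? = some h → E a h) →
    (∀ g, (a :: t).getLast? = some g → E b g) →
    (∀ p m q, [p, m, q] <:+: (a :: (t ++ [b])) → ¬(E m p ∧ E m q)) →
    ∃ c t1 t2, t = t1 ++ c :: t2 ∧ ((a :: t1) ++ [c]).Chain' E ∧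
      ((b :: t2.reverse) ++ [c]).Chain' E := by
  intro t
  induction t with
  | nil =>
    intro a b _ hh hg _
    exact absurd (Relation.TransGen.head (hh b rfl) (Relation.TransGen.single (hg a rfl)))
      (hacyc a)
  | cons w t' ih =>
    intro a b hc hh hg hnc
    have hEaw : E a w := hh w (by simp)
    rw [List.cons_append] at hc
    change List.IsChain _ _ at hc
    rw [List.isChain_cons_cons] at hc
    obtain ⟨h', rest, hsplit⟩ : ∃ h' rest, t' ++ [b] = h' :: rest := by
      cases t' <;> exact ⟨_, _, rfl⟩
    have hU : E w h' ∨ E h' w := by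
      have := (List.isChain_cons.mp hc.2).1
      rw [hsplit] at this
      exact this h' rfl
    rcases hU with hwf | hwb
    · -- direction continues forward: recurse
      obtain ⟨c, t1, t2, ht, hch1, hch2⟩ := ih w b hc.2
        (fun g hg' => by rw [hsplit] at hg'; cases hg'; exact hwf)
        (fun g hg' => hg g (by rwa [List.getLast?_cons_cons]))
        (fun p m q hinf => hnc p m q (hinf.trans ⟨[a], [], by simp⟩))
      refine ⟨c, w :: t1, t2, by simp [ht], ?_, hch2⟩
      change List.IsChain _ _
      rw [show (a :: (w :: t1)) ++ [c] = a :: ((w :: t1) ++ [c]) from by simp,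
        List.isChain_cons]
      exact ⟨fun yy hyy => by
        rw [List.cons_append, List.head?_cons] at hyy; cases hyy; exact hEaw, hch1⟩
    · -- w is the collider
      refine ⟨w, [], t', by simp, by simp [List.Chain', List.isChain_pair, hEaw], ?_⟩
      exact bwd t' w b hc.2 (fun g hg' => by rw [hsplit] at hg'; cases hg'; exact hwb)
        (fun p m q hinf => hnc p m q (hinf.trans ⟨[a], [], by simp⟩))

end CSaux

open CSaux in
/-- Two consecutive sources on an acyclic undirected d-connected path are both
unblocked ancestors of some common conditioned node `z ∈ Z`. -/
theorem consecutive_sources_share_conditioned_descendant {V : Type} [Fintype V]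
    (E : V → V → Prop) (hacyc : AcyclicRel E) (Z : Set V) (u v : V)
    (hu : u ∉ Z) (hv : v ∉ Z) (l1 l2 l3 : List V) (x y : V)
    (hpath : UPathFrom E u v (l1 ++ [x] ++ l2 ++ [y] ++ l3))
    (hconn : DConnPath E Z (l1 ++ [x] ++ l2 ++ [y] ++ l3))
    (hx : SourceOn E (l1 ++ [x] ++ l2 ++ [y] ++ l3) x)
    (hy : SourceOn E (l1 ++ [x] ++ l2 ++ [y] ++ l3) y)
    (hbetween : ∀ w ∈ l2, ¬ SourceOn E (l1 ++ [x] ++ l2 ++ [y] ++ l3) w) :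
    ∃ z ∈ Z, UnblockedAnc E Z x z ∧ UnblockedAnc E Z y z := by
  obtain ⟨⟨hchain, hnd⟩, hhead, hlast, hlen⟩ := hpath
  obtain ⟨hmed, hcon, hcol⟩ := hconn
  have hform1 : l1 ++ [x] ++ l2 ++ [y] ++ l3 = l1 ++ x :: (l2 ++ y :: l3) := by simp
  have hform2 : l1 ++ [x] ++ l2 ++ [y] ++ l3 = (l1 ++ x :: l2) ++ y :: l3 := by simp
  have hnd1 : (l1 ++ x :: (l2 ++ y :: l3)).Nodup := by rw [← hform1]; exact hnd
  have hnd2 : ((l1 ++ x :: l2) ++ y :: l3).Nodup := by rw [← hform2]; exact hnd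
  -- x: the segment edge at x points away from x, and x ∉ Z
  have hxmain : (∀ h, (l2 ++ [y]).head? = some h → E x h) ∧ x ∉ Z := by
    rcases hx with ⟨b, ⟨tl, htl⟩, hEb⟩ | ⟨b, ⟨s, hs⟩, hEb⟩ | ⟨p, q, ⟨s, t, hst⟩, hExp, hExq⟩
    · -- prefix case : forces l1 = []
      have hxu : x ∉ Z := by
        have : (l1 ++ [x] ++ l2 ++ [y] ++ l3).head? = some x := by
          rw [← htl]; rfl
        rw [hhead] at this
        injection this with h'
        rw [← h']; exact hu
      refine ⟨?_, hxu⟩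
      rw [hform1] at htl
      cases l1 with
      | cons h1 l1' =>
        exfalso
        simp only [List.cons_append, List.cons.injEq] at htl
        obtain ⟨rfl, -⟩ := htl
        rw [List.cons_append] at hnd1
        exact (List.nodup_cons.mp hnd1).1 (by simp)
      | nil =>
        simp only [List.nil_append, List.cons.injEq, List.cons_append] at htl
        obtain ⟨-, htl2⟩ := htl
        intro h hh
        have : (l2 ++ y :: l3).head? = some b := by rw [← htl2]; rfl
        rw [head?_append_cons, hh] at this
        injection this with h'
        rw [h']; exact hEb
    · -- suffix case : impossible
      exfalso
      have heq : (s ++ [b]) ++ x :: ([] : List V) = l1 ++ x :: (l2 ++ y :: l3) := by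
        rw [← hform1, ← hs]; simp
      have hn : ((s ++ [b]) ++ x :: ([] : List V)).Nodup := by rw [heq]; exact hnd1
      obtain ⟨-, h2⟩ := nodup_split (s ++ [b]) l1 [] (l2 ++ y :: l3) x hn heq
      cases l2 <;> simp at h2
    · -- confounder case
      refine ⟨?_, hcon x ⟨p, q, ⟨s, t, hst⟩, hExp, hExq⟩⟩
      have heq : (s ++ [p]) ++ x :: (q :: t) = l1 ++ x :: (l2 ++ y :: l3) := by
        rw [← hform1, ← hst]; simp
      have hn : ((s ++ [p]) ++ x :: (q :: t)).Nodup := by rw [heq]; exact hnd1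
      obtain ⟨-, h2⟩ := nodup_split (s ++ [p]) l1 (q :: t) (l2 ++ y :: l3) x hn heq
      intro h hh
      have : (l2 ++ y :: l3).head? = some q := by rw [← h2]; rfl
      rw [head?_append_cons, hh] at this
      injection this with h'
      rw [h']; exact hExq
  -- y: the segment edge at y points away from y, and y ∉ Z
  have hymain : (∀ g, (x :: l2).getLast? = some g → E y g) ∧ y ∉ Z := by
    have hlast2 : (l1 ++ x :: l2).getLast? = (x :: l2).getLast? := by
      rw [List.getLast?_append_of_ne_nil _ (by simp)]
    rcases hy with ⟨b, ⟨tl, htl⟩, hEb⟩ | ⟨b, ⟨s, hs⟩, hEb⟩ | ⟨p, q, ⟨s, t, hst⟩, hEyp, hEyq⟩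
    · -- prefix case : impossible
      exfalso
      rw [hform2] at htl
      have hy_mem : y ∈ l1 ++ x :: l2 := by
        cases l1 with
        | nil =>
          simp only [List.nil_append, List.cons_append, List.cons.injEq] at htl
          rw [htl.1]; exact List.mem_cons_self
        | cons h1 l1' =>
          simp only [List.cons_append, List.cons.injEq] at htl
          rw [htl.1]; exact List.mem_cons_self
      exact (List.disjoint_of_nodup_append hnd2) hy_mem (List.mem_cons_self)
    · -- suffix case : forces l3 = []
      have hyv : y ∉ Z := by
        have : (l1 ++ [x] ++ l2 ++ [y] ++ l3).getLast? = some y := by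
          rw [← hs, show s ++ [b, y] = (s ++ [b]) ++ [y] from by simp,
            List.getLast?_concat]
        rw [hlast] at this
        injection this with h'
        rw [← h']; exact hv
      refine ⟨?_, hyv⟩
      have heq : (s ++ [b]) ++ y :: ([] : List V) = (l1 ++ x :: l2) ++ y :: l3 := by
        rw [← hform2, ← hs]; simp
      have hn : ((s ++ [b]) ++ y :: ([] : List V)).Nodup := by rw [heq]; exact hnd2
      obtain ⟨h1, -⟩ := nodup_split (s ++ [b]) (l1 ++ x :: l2) [] l3 y hn heq
      intro g hg
      have : (l1 ++ x :: l2).getLast? = some b := by rw [← h1]; exact List.getLast?_concat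
      rw [hlast2, hg] at this
      injection this with h'
      rw [h']; exact hEb
    · -- confounder case
      refine ⟨?_, hcon y ⟨p, q, ⟨s, t, hst⟩, hEyp, hEyq⟩⟩
      have heq : (s ++ [p]) ++ y :: (q :: t) = (l1 ++ x :: l2) ++ y :: l3 := by
        rw [← hform2, ← hst]; simp
      have hn : ((s ++ [p]) ++ y :: (q :: t)).Nodup := by rw [heq]; exact hnd2
      obtain ⟨h1, -⟩ := nodup_split (s ++ [p]) (l1 ++ x :: l2) (q :: t) l3 y hn heq
      intro g hg
      have : (l1 ++ x :: l2).getLast? = some p := by rw [← h1]; exact List.getLast?_concat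
      rw [hlast2, hg] at this
      injection this with h'
      rw [h']; exact hEyp
  obtain ⟨hEx, hxZ⟩ := hxmain
  obtain ⟨hEy, hyZ⟩ := hymain
  -- the middle segment
  have hs0inf : (x :: (l2 ++ [y])) <:+: (l1 ++ [x] ++ l2 ++ [y] ++ l3) := ⟨l1, l3, by simp⟩
  have hchain0 : (x :: (l2 ++ [y])).Chain' (fun p q => E p q ∨ E q p) :=
    hchain.infix hs0inf
  have hnoconf : ∀ p m q, [p, m, q] <:+: (x :: (l2 ++ [y])) → ¬(E m p ∧ E m q) := by
    intro p m q hinf hcontra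
    have hm : m ∈ l2 := by
      obtain ⟨s, t, hst⟩ := hinf
      cases s with
      | nil =>
        simp only [List.nil_append, List.cons_append, List.cons.injEq] at hst
        obtain ⟨-, hst2⟩ := hst
        cases l2 with
        | nil => simp at hst2
        | cons c0 l2' =>
          rw [List.cons_append] at hst2
          injection hst2 with h' h''
          rw [h']; exact List.mem_cons_self
      | cons h s' =>
        rw [List.cons_append, List.cons_append] at hst
        injection hst with hid hst2
        have hst3 : s' ++ (p :: m :: q :: t) = l2 ++ [y] := by
          rw [← hst2]; simp
        have hdl : (s' ++ (p :: m :: q :: t)).dropLast = l2 := by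
          rw [hst3, List.dropLast_concat]
        rw [List.dropLast_append_of_ne_nil (by simp)] at hdl
        rw [← hdl]
        refine List.mem_append_right _ ?_
        rw [List.dropLast_cons₂, List.dropLast_cons₂]
        exact List.mem_cons_of_mem _ (List.mem_cons_self)
    exact hbetween m hm (Or.inr (Or.inr ⟨p, q, hinf.trans hs0inf, hcontra.1, hcontra.2⟩))
  obtain ⟨c, t1, t2, ht12, hch1, hch2⟩ := fwd hacyc l2 x y hchain0 hEx hEy hnoconf
  -- c is a collider on the path
  obtain ⟨next, tl, hnt⟩ : ∃ n tlx, t2 ++ [y] = n :: tlx := by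
    cases t2 <;> exact ⟨_, _, rfl⟩
  set prev := (x :: t1).getLast (by simp) with hprevdef
  have hxt1 : x :: t1 = (x :: t1).dropLast ++ [prev] :=
    (List.dropLast_append_getLast _).symm
  have hprev? : (x :: t1).getLast? = some prev := List.getLast?_eq_getLast _
  have hEprevc : E prev c := by
    obtain ⟨-, -, h3⟩ := List.isChain_append.mp hch1
    exact h3 prev hprev? c rfl
  have hEnextc : E next c := by
    obtain ⟨-, -, h3⟩ := List.isChain_append.mp hch2
    refine h3 next ?_ c rfl
    rw [show y :: t2.reverse = (t2 ++ [y]).reverse from by simp,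
      List.getLast?_reverse, hnt]
    rfl
  have htripinf : [prev, c, next] <:+: (l1 ++ [x] ++ l2 ++ [y] ++ l3) := by
    refine ⟨l1 ++ (x :: t1).dropLast, tl ++ l3, ?_⟩
    calc (l1 ++ (x :: t1).dropLast) ++ [prev, c, next] ++ (tl ++ l3)
        = l1 ++ ((((x :: t1).dropLast ++ [prev]) ++ [c]) ++ (next :: tl)) ++ l3 := by
          simp
      _ = l1 ++ (((x :: t1) ++ [c]) ++ (t2 ++ [y])) ++ l3 := by rw [← hxt1, ← hnt]
      _ = l1 ++ [x] ++ l2 ++ [y] ++ l3 := by simp [ht12]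
  obtain ⟨d, hdZ, hdesc⟩ := hcol c ⟨prev, next, htripinf, hEprevc, hEnextc⟩
  obtain ⟨z, hzZ, hcz⟩ := desc_trunc hdesc hdZ
  -- x reaches c through mediators only
  have hmedt1 : ∀ w ∈ t1, w ∉ Z := by
    have hinfx : (x :: (t1 ++ [c])) <:+: (l1 ++ [x] ++ l2 ++ [y] ++ l3) :=
      ⟨l1, t2 ++ [y] ++ l3, by simp [ht12]⟩
    have hchx : (x :: (t1 ++ [c])).Chain' E := by
      rw [show x :: (t1 ++ [c]) = (x :: t1) ++ [c] from by simp]; exact hch1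
    have hmm := mid (P := fun w => w ∉ Z) (t1 ++ [c]) x hchx
      (fun p b q hinf hpb hbq => hmed b ⟨p, q, hinf.trans hinfx, Or.inl ⟨hpb, hbq⟩⟩)
    intro w hw
    exact hmm w (by rw [List.dropLast_concat]; exact hw)
  have hrtgx : Relation.ReflTransGen (fun p q => E p q ∧ p ∉ Z) x c := by
    refine chain_rtg ((x :: t1) ++ [c]) x c hch1 rfl (List.getLast?_concat) ?_
    intro w hw
    rw [List.dropLast_concat] at hw
    rcases List.mem_cons.mp hw with rfl | hw
    · exact hxZ
    · exact hmedt1 w hw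
  -- y reaches c through mediators only
  have hNinf : (c :: (t2 ++ [y])) <:+: (l1 ++ [x] ++ l2 ++ [y] ++ l3) :=
    ⟨l1 ++ x :: t1, l3, by simp [ht12]⟩
  have hmedt2 : ∀ w ∈ t2.reverse, w ∉ Z := by
    have hchy : (y :: (t2.reverse ++ [c])).Chain' E := by
      rw [show y :: (t2.reverse ++ [c]) = (y :: t2.reverse) ++ [c] from by simp]
      exact hch2
    have hmm := mid (P := fun w => w ∉ Z) (t2.reverse ++ [c]) y hchy
      (fun p b q hinf hpb hbq => by
        have h1 : [q, b, p].reverse <:+: (c :: (t2 ++ [y])).reverse := by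
          simpa using hinf
        exact hmed b ⟨q, p, (List.reverse_infix.mp h1).trans hNinf,
          Or.inr ⟨hbq, hpb⟩⟩)
    intro w hw
    exact hmm w (by rw [List.dropLast_concat]; exact hw)
  have hrtgy : Relation.ReflTransGen (fun p q => E p q ∧ p ∉ Z) y c := by
    refine chain_rtg ((y :: t2.reverse) ++ [c]) y c hch2 rfl (List.getLast?_concat) ?_
    intro w hw
    rw [List.dropLast_concat] at hw
    rcases List.mem_cons.mp hw with rfl | hw
    · exact hyZ
    · exact hmedt2 w hw
  exact ⟨z, hzZ, rtg_unblocked (hrtgx.trans hcz), rtg_unblocked (hrtgy.trans hcz)⟩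
end

section
/- Let G be a DAG over a value type X with at least two elements, Z ⊆ V with u, v ∉ Z, u ≠ v, and Z = ∅. Then u and v are d-separated given the empty set if and only if for every graph function f compatible with G and every pair of exogenous-term assignments U, U' that agree on all nodes that are not ancestors of u, the evaluations satisfy f_U(v) = f_{U'}(v). -/
section AuxNoninterf
variable {V : Type} {E : V → V → Prop}

lemma aux_no2 (hacyc : ∀ v, ¬ Relation.TransGen E v v) {a b : V}
    (h1 : E a b) (h2 : E b a) : False :=
  hacyc a (Relation.TransGen.head h1 (Relation.TransGen.single h2))

lemma aux_rtg_of_walk : ∀ (l : List V) (a b : V), l.Chain' E → l.head? = some a →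
    l.getLast? = some b → Relation.ReflTransGen E a b
  | [], _, _, _, h, _ => by simp at h
  | [x], a, b, _, ha, hb => by
      simp only [List.head?_cons, Option.some.injEq] at ha
      simp only [List.getLast?_singleton, Option.some.injEq] at hb
      subst ha; subst hb; exact Relation.ReflTransGen.refl
  | x :: y :: t, a, b, hc, ha, hb => by
      simp only [List.head?_cons, Option.some.injEq] at ha
      subst ha
      dsimp only [List.Chain'] at hc; rw [List.isChain_cons_cons] at hc
      have hb' : (y :: t).getLast? = some b := by
        rw [← hb]; rfl
      exact Relation.ReflTransGen.head hc.1 (aux_rtg_of_walk (y :: t) y b hc.2 rfl hb')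

lemma aux_walk_of_rtg {a b : V} (h : Relation.ReflTransGen E a b) :
    ∃ l : List V, l.Chain' E ∧ l.head? = some a ∧ l.getLast? = some b := by
  induction h with
  | refl => exact ⟨[a], List.isChain_singleton a, rfl, rfl⟩
  | @tail b' c' hab hbc ih =>
      obtain ⟨l, hc, hh, hl⟩ := ih
      refine ⟨l ++ [c'], ?_, ?_, ?_⟩
      · exact hc.append (List.isChain_singleton _) (by
          intro x hx y hy
          simp only [List.head?_cons, Option.mem_def, Option.some.injEq] at hy
          rw [Option.mem_def, hl] at hx
          cases hx; cases hy; exact hbc)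
      · rw [List.head?_append_of_ne_nil]
        · exact hh
        · intro h; subst h; simp at hh
      · rw [List.getLast?_append_cons]; rfl

lemma aux_dup_split {l : List V} (h : ¬ l.Nodup) :
    ∃ (x : V) (l1 l2 l3 : List V), l = l1 ++ x :: (l2 ++ x :: l3) := by
  obtain ⟨x, hx⟩ := List.exists_duplicate_iff_not_nodup.2 h
  rw [List.duplicate_iff_sublist] at hx
  clear h
  induction l with
  | nil => simp at hx
  | cons y t ih =>
      cases hx with
      | cons _ h' =>
          obtain ⟨x', l1, l2, l3, rfl⟩ := ih h'
          exact ⟨x', y :: l1, l2, l3, rfl⟩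
      | cons_cons _ h' =>
          obtain ⟨l2, l3, rfl⟩ := List.append_of_mem (List.singleton_sublist.mp h')
          exact ⟨x, [], l2, l3, rfl⟩

lemma aux_cut {a b : V} {l : List V} (hc : l.Chain' E) (ha : l.head? = some a)
    (hb : l.getLast? = some b) (hnd : ¬ l.Nodup) :
    ∃ l' : List V, l'.Chain' E ∧ l'.head? = some a ∧ l'.getLast? = some b ∧
      l'.length < l.length := by
  obtain ⟨x, l1, l2, l3, rfl⟩ := aux_dup_split hnd
  refine ⟨l1 ++ x :: l3, ?_, ?_, ?_, ?_⟩
  · have hc' : (l1 ++ [x]).Chain' E ∧ (l2 ++ x :: l3).Chain' E := by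
      have : l1 ++ x :: (l2 ++ x :: l3) = (l1 ++ [x]) ++ (l2 ++ x :: l3) := by simp
      dsimp only [List.Chain'] at hc; rw [this, List.isChain_append] at hc
      exact ⟨hc.1, hc.2.1⟩
    have hx3 : (x :: l3).Chain' E := hc'.2.suffix ⟨l2, rfl⟩
    have : l1 ++ x :: l3 = (l1 ++ [x]) ++ l3 := by simp
    dsimp only [List.Chain']; rw [this, List.isChain_append]
    refine ⟨hc'.1, hx3.tail, ?_⟩
    intro p hp q hq
    simp only [List.getLast?_append_cons, List.getLast?_singleton, Option.mem_def,
      Option.some.injEq] at hp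
    subst hp
    exact (List.isChain_cons.1 hx3).1 q hq
  · cases l1 with
    | nil => simpa using ha
    | cons z t => simpa using ha
  · rw [List.getLast?_append_cons]
    rw [show l1 ++ x :: (l2 ++ x :: l3) = (l1 ++ x :: l2) ++ x :: l3 by simp,
      List.getLast?_append_cons] at hb
    exact hb
  · simp only [List.length_append, List.length_cons]; omega

lemma aux_nocollider_chain (hacyc : ∀ v, ¬ Relation.TransGen E v v)
    {l : List V} (hc : l.Chain' E) (b : V) : ¬ Collider E l b := by
  rintro ⟨p, q, hinf, hpb, hqb⟩
  have h3 : List.Chain' E [p, b, q] := hc.infix hinf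
  dsimp only [List.Chain'] at h3; rw [List.isChain_cons_cons, List.isChain_pair] at h3
  exact hacyc b (Relation.TransGen.head h3.2 (Relation.TransGen.single hqb))

lemma aux_valley_nocollider (hacyc : ∀ v, ¬ Relation.TransGen E v v) :
    ∀ (A B : List V), A.Chain' (flip E) → B.Chain' E → ∀ b, ¬ Collider E (A ++ B) b := by
  intro A
  induction A with
  | nil => intro B _ hB b hcol; exact aux_nocollider_chain hacyc hB b hcol
  | cons a' A' ih =>
      rintro B hA hB b ⟨p, q, hinf, hpb, hqb⟩
      rw [List.cons_append, List.infix_cons_iff] at hinf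
      rcases hinf with hpre | hinf
      · rcases List.cons_prefix_cons.1 hpre with ⟨rfl, hpre'⟩
        cases A' with
        | nil =>
            have : List.Chain' E [b, q] := hB.prefix (by simpa using hpre')
            dsimp only [List.Chain'] at this; rw [List.isChain_pair] at this
            exact hacyc b (Relation.TransGen.head this (Relation.TransGen.single hqb))
        | cons a'' A'' =>
            rcases List.cons_prefix_cons.1 hpre' with ⟨rfl, _⟩
            dsimp only [List.Chain'] at hA; rw [List.isChain_cons_cons] at hA
            exact hacyc b (Relation.TransGen.head hA.1 (Relation.TransGen.single hpb))
      · exact ih B hA.tail hB b ⟨p, q, hinf, hpb, hqb⟩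


lemma aux_split : ∀ (l : List V), l.Chain' (fun a b => E a b ∨ E b a) →
    (∀ b, ¬ Collider E l b) → l ≠ [] →
    ∃ (l1 : List V) (m : V) (l2 : List V), l = l1 ++ m :: l2 ∧
      (l1 ++ [m]).Chain' (flip E) ∧ (m :: l2).Chain' E
  | [], _, _, hne => absurd rfl hne
  | [x], _, _, _ => ⟨[], x, [], rfl, List.isChain_singleton x, List.isChain_singleton x⟩
  | x :: y :: t, hc, hnc, _ => by
      dsimp only [List.Chain'] at hc; rw [List.isChain_cons_cons] at hc
      obtain ⟨l1', m, l2', heq, h1, h2⟩ := aux_split (y :: t) hc.2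
        (fun b ⟨p, q, hinf, hpb, hqb⟩ => hnc b ⟨p, q, hinf.trans ⟨[x], [], by simp⟩, hpb, hqb⟩)
        (by simp)
      rcases hc.1 with hxy | hyx
      · cases l1' with
        | nil =>
            simp only [List.nil_append, List.cons.injEq] at heq
            obtain ⟨rfl, rfl⟩ := heq
            exact ⟨[], x, y :: t, rfl, List.isChain_singleton x,
              List.isChain_cons_cons.2 ⟨hxy, h2⟩⟩
        | cons z l1'' =>
            simp only [List.cons_append, List.cons.injEq] at heq
            obtain ⟨rfl, heq'⟩ := heq
            exfalso
            obtain ⟨w, rest, hw⟩ : ∃ w rest, l1'' ++ m :: l2' = w :: rest := by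
              cases h : l1'' ++ m :: l2' with
              | nil => simp at h
              | cons w rest => exact ⟨w, rest, rfl⟩
            have hwy : E w y := by
              dsimp only [List.Chain'] at h1; rw [List.cons_append, List.isChain_cons] at h1
              have hhd : (l1'' ++ [m]).head? = some w := by
                cases l1'' with
                | nil => simp_all
                | cons a b => simp_all
              exact h1.1 w (Option.mem_def.2 hhd)
            exact hnc y ⟨x, w, ⟨[], rest, by simp [heq', hw]⟩, hxy, hwy⟩
      · refine ⟨x :: l1', m, l2', by simp [heq], ?_, h2⟩
        dsimp only [List.Chain']; rw [List.cons_append, List.isChain_cons]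
        refine ⟨?_, h1⟩
        intro p hp
        have hhd : (l1' ++ [m]).head? = (l1' ++ m :: l2').head? := by
          cases l1' <;> simp
        rw [hhd, ← heq] at hp
        simp only [List.head?_cons, Option.mem_def, Option.some.injEq] at hp
        subst hp
        exact hyx

lemma aux_common (hacyc : ∀ v, ¬ Relation.TransGen E v v) {a u v : V}
    (hu : Relation.ReflTransGen E a u) (hv : Relation.ReflTransGen E a v)
    (hne : u ≠ v) :
    ∃ l : List V, (l.Chain' (fun a b => E a b ∨ E b a) ∧ l.Nodup) ∧
      l.head? = some u ∧ l.getLast? = some v ∧ 2 ≤ l.length ∧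
      ∀ b, ¬ Collider E l b := by
  classical
  set P : ℕ → Prop := fun n => ∃ (a' : V) (p q : List V),
    (p.Chain' E ∧ p.head? = some a' ∧ p.getLast? = some u) ∧
    (q.Chain' E ∧ q.head? = some a' ∧ q.getLast? = some v) ∧
    p.length + q.length = n with hP
  have hex : ∃ n, P n := by
    obtain ⟨p, hp⟩ := aux_walk_of_rtg hu
    obtain ⟨q, hq⟩ := aux_walk_of_rtg hv
    exact ⟨p.length + q.length, a, p, q, hp, hq, rfl⟩
  obtain ⟨a', p, q, hp, hq, hlen⟩ := Nat.find_spec hex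
  -- p is nodup
  have hpnd : p.Nodup := by
    by_contra hnd
    obtain ⟨p', hc', ha', hb', hlt⟩ := aux_cut hp.1 hp.2.1 hp.2.2 hnd
    exact Nat.find_min hex (hlen ▸ (by omega : p'.length + q.length < p.length + q.length))
      ⟨a', p', q, ⟨hc', ha', hb'⟩, hq, rfl⟩
  have hqnd : q.Nodup := by
    by_contra hnd
    obtain ⟨q', hc', ha', hb', hlt⟩ := aux_cut hq.1 hq.2.1 hq.2.2 hnd
    exact Nat.find_min hex (hlen ▸ (by omega : p.length + q'.length < p.length + q.length))
      ⟨a', p, q', hp, ⟨hc', ha', hb'⟩, rfl⟩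
  -- suffix walk helper
  have suffix_walk : ∀ (l : List V) (b x : V), l.Chain' E → l.getLast? = some b → x ∈ l →
      ∃ l2, (x :: l2).Chain' E ∧ (x :: l2).head? = some x ∧ (x :: l2).getLast? = some b ∧
        (x :: l2) <:+ l := by
    intro l b x hc hb hx
    obtain ⟨s, t, rfl⟩ := List.append_of_mem hx
    refine ⟨t, hc.suffix ⟨s, rfl⟩, rfl, ?_, ⟨s, rfl⟩⟩
    rw [List.getLast?_append_cons] at hb; exact hb
  -- no element of p.tail lies in q
  have hdisj1 : ∀ x ∈ p.tail, x ∉ q := by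
    rintro x hxp hxq
    obtain ⟨h0, t, rfl⟩ : ∃ h0 t, p = h0 :: t := by
      cases p with
      | nil => simp at hxp
      | cons h0 t => exact ⟨h0, t, rfl⟩
    simp only [List.tail_cons] at hxp
    obtain ⟨p2, hp2c, hp2h, hp2l, hp2s⟩ := suffix_walk _ u x hp.1 hp.2.2 (List.mem_cons_of_mem _ hxp)
    obtain ⟨q2, hq2c, hq2h, hq2l, hq2s⟩ := suffix_walk _ v x hq.1 hq.2.2 hxq
    have hlp : (x :: p2).length < (h0 :: t).length := by
      obtain ⟨s, hs⟩ := hp2s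
      have hs' := congrArg List.length hs
      simp only [List.length_append, List.length_cons] at hs' ⊢
      obtain ⟨s1, t1, rfl⟩ := List.append_of_mem hxp
      -- need s ≠ []
      rcases s with _ | ⟨y, s'⟩
      · exfalso
        simp only [List.nil_append] at hs
        -- then h0 :: t = x :: p2, so x = h0 and x ∈ t contradicts... not nodup
        have : x = h0 := by simpa using congrArg List.head? hs
        subst this
        exact (List.nodup_cons.1 hpnd).1 hxp
      · simp only [List.length_cons] at hs' ⊢; omega
    have hlq : (x :: q2).length ≤ q.length :=
      List.IsSuffix.length_le hq2s
    refine Nat.find_min hex (hlen ▸ ?_) ⟨x, x :: p2, x :: q2, ⟨hp2c, hp2h, hp2l⟩,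
      ⟨hq2c, hq2h, hq2l⟩, rfl⟩
    simp only [List.length_cons] at hlp hlq ⊢
    omega
  have hdisj2 : ∀ x ∈ q.tail, x ∉ p := by
    rintro x hxq hxp
    obtain ⟨h0, t, rfl⟩ : ∃ h0 t, q = h0 :: t := by
      cases q with
      | nil => simp at hxq
      | cons h0 t => exact ⟨h0, t, rfl⟩
    simp only [List.tail_cons] at hxq
    obtain ⟨q2, hq2c, hq2h, hq2l, hq2s⟩ := suffix_walk _ v x hq.1 hq.2.2 (List.mem_cons_of_mem _ hxq)
    obtain ⟨p2, hp2c, hp2h, hp2l, hp2s⟩ := suffix_walk _ u x hp.1 hp.2.2 hxp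
    have hlq : (x :: q2).length < (h0 :: t).length := by
      obtain ⟨s, hs⟩ := hq2s
      rcases s with _ | ⟨y, s'⟩
      · exfalso
        simp only [List.nil_append] at hs
        have : x = h0 := by simpa using congrArg List.head? hs
        subst this
        exact (List.nodup_cons.1 hqnd).1 hxq
      · have hs' := congrArg List.length hs
        simp only [List.length_append, List.length_cons] at hs' ⊢; omega
    have hlp : (x :: p2).length ≤ p.length := List.IsSuffix.length_le hp2s
    refine Nat.find_min hex (hlen ▸ ?_) ⟨x, x :: p2, x :: q2, ⟨hp2c, hp2h, hp2l⟩,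
      ⟨hq2c, hq2h, hq2l⟩, rfl⟩
    simp only [List.length_cons] at hlp hlq ⊢
    omega
  -- assemble
  have hpne : p ≠ [] := by intro h; subst h; simp at hp
  have hqne : q ≠ [] := by intro h; subst h; simp at hq
  refine ⟨p.reverse ++ q.tail, ⟨?_, ?_⟩, ?_, ?_, ?_, ?_⟩
  · -- chain
    refine List.IsChain.append ?_ ?_ ?_
    · exact (List.isChain_reverse.2 (hp.1.imp fun _ _ h => Or.inr h))
    · exact (hq.1.tail.imp fun _ _ h => Or.inl h)
    · intro z hz y hy
      rw [List.getLast?_reverse, Option.mem_def, hp.2.1, Option.some.injEq] at hz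
      subst hz
      obtain ⟨qh, qt, rfl⟩ : ∃ qh qt, q = qh :: qt := by
        cases q with
        | nil => exact absurd rfl hqne
        | cons qh qt => exact ⟨qh, qt, rfl⟩
      have : qh = a' := by simpa using hq.2.1
      subst this
      left
      exact (List.isChain_cons.1 hq.1).1 y hy
  · exact List.Nodup.append (List.nodup_reverse.2 hpnd) (hqnd.sublist (List.tail_sublist q))
      (fun x hx1 hx2 => hdisj2 x (by exact hx2) (List.mem_reverse.1 hx1))
  · rw [List.head?_append_of_ne_nil _ (by simpa using hpne), List.head?_reverse]
    exact hp.2.2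
  · obtain ⟨qh, qt, rfl⟩ : ∃ qh qt, q = qh :: qt := by
      cases q with
      | nil => exact absurd rfl hqne
      | cons qh qt => exact ⟨qh, qt, rfl⟩
    have hqh : qh = a' := by simpa using hq.2.1
    cases qt with
    | nil =>
        have hav : a' = v := by simpa [hqh] using hq.2.2
        simp only [List.tail_cons, List.append_nil, List.getLast?_reverse]
        rw [hp.2.1, hav]
    | cons c t' =>
        simp only [List.tail_cons]
        rw [List.getLast?_append_cons]
        have := hq.2.2
        rwa [List.getLast?_cons_cons] at this
  · -- length
    have hlen2 : ∀ (L : List V), u ∈ L → v ∈ L → 2 ≤ L.length := by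
      intro L h1 h2
      cases L with
      | nil => simp at h1
      | cons z rest =>
          cases rest with
          | nil =>
              simp only [List.mem_singleton] at h1 h2
              exact absurd (h1.trans h2.symm) hne
          | cons w t => simp only [List.length_cons]; omega
    have hul : u ∈ p.reverse ++ q.tail :=
      List.mem_append_left _ (List.mem_reverse.2 (List.mem_of_mem_getLast? (by rw [hp.2.2]; rfl)))
    have hvl : v ∈ p.reverse ++ q.tail := by
      obtain ⟨qh, qt, rfl⟩ : ∃ qh qt, q = qh :: qt := by
        cases q with
        | nil => exact absurd rfl hqne
        | cons qh qt => exact ⟨qh, qt, rfl⟩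
      have hqh : qh = a' := by simpa using hq.2.1
      cases qt with
      | nil =>
          have hav : a' = v := by simpa [hqh] using hq.2.2
          refine List.mem_append_left _ (List.mem_reverse.2 ?_)
          rw [← hav, ← hqh]
          exact List.mem_of_mem_head? (by rw [hp.2.1, hqh]; rfl)
      | cons c t' =>
          refine List.mem_append_right _ ?_
          simp only [List.tail_cons]
          have := hq.2.2
          rw [List.getLast?_cons_cons] at this
          exact List.mem_of_mem_getLast? (Option.mem_def.2 this)
    exact hlen2 _ hul hvl
  · intro b
    exact aux_valley_nocollider hacyc p.reverse q.tail
      (List.isChain_reverse.2 (hp.1.imp fun _ _ h => h)) hq.1.tail b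



end AuxNoninterf

/-- With empty conditioning set, `u` and `v` are d-separated iff for every
compatible graph function, changing only ancestors of `u` never changes the
value of `v`. -/
theorem dSeparated_empty_iff_noninterference {V X : Type} [Fintype V]
    [DecidableEq X] (hX : ∃ x y : X, x ≠ y)
    (pa : V → List V) (hacyc : AcyclicRel (fun a b => a ∈ pa b))
    (u v : V) (hne : u ≠ v) :
    DSeparated (fun a b => a ∈ pa b) (∅ : Set V) u v ↔
      ∀ (g : V → X → List X → X) (f : (V → X) → V → X),
        (∀ (U : V → X) (w : V), f U w = g w (U w) ((pa w).map (f U))) →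
        ∀ U U' : V → X,
          (∀ a, ¬ Relation.ReflTransGen (fun a b => a ∈ pa b) a u →
            U a = U' a) →
          f U v = f U' v := by
  classical
  set E : V → V → Prop := fun a b => a ∈ pa b with hE
  have hwfT : WellFounded (Relation.TransGen E) := by
    haveI : IsTrans V (Relation.TransGen E) := ⟨fun _ _ _ => Relation.TransGen.trans⟩
    haveI : IsIrrefl V (Relation.TransGen E) := ⟨hacyc⟩
    exact Finite.wellFounded_of_trans_of_irrefl _
  constructor
  · -- d-separation → noninterference
    intro hsep g f heq U U' hU
    have hNoCommon : ∀ a, Relation.ReflTransGen E a u → Relation.ReflTransGen E a v → False := by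
      intro a hau hav
      obtain ⟨l, hup, hh, hl, hlen, hnc⟩ := aux_common hacyc hau hav hne
      rcases hsep l ⟨hup, hh, hl, hlen⟩ with ⟨b, hb, -⟩ | ⟨b, hcol, -⟩
      · exact hb
      · exact hnc b hcol
    have key : ∀ w (U U' : V → X), (∀ a, Relation.ReflTransGen E a w → U a = U' a) →
        f U w = f U' w := by
      intro w
      induction w using hwfT.fix with
      | _ w ih =>
        intro U U' hUU
        rw [heq U w, heq U' w, hUU w Relation.ReflTransGen.refl]
        congr 1
        refine List.map_congr_left ?_
        intro p hp
        exact ih p (Relation.TransGen.single hp) U U'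
          (fun a ha => hUU a (ha.tail hp))
    refine key v U U' ?_
    intro a hav
    by_cases hr : Relation.ReflTransGen E a u
    · exact (hNoCommon a hr hav).elim
    · exact hU a hr
  · -- noninterference → d-separation
    intro hRHS l hl
    by_cases hcol : ∃ b, Collider E l b
    · obtain ⟨b, hb⟩ := hcol
      exact Or.inr ⟨b, hb, by rintro ⟨d, hd, -⟩; exact hd⟩
    · exfalso
      push_neg at hcol
      obtain ⟨⟨hchain, hnodup⟩, hhead, hlast, hlen⟩ := hl
      have hlne : l ≠ [] := by intro h; subst h; simp at hhead
      obtain ⟨l1, m, l2, rfl, hA, hB⟩ := aux_split l hchain (fun b => hcol b) hlne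
      -- m is an ancestor of u
      have hmu : Relation.ReflTransGen E m u := by
        refine aux_rtg_of_walk (l1 ++ [m]).reverse m u ?_ ?_ ?_
        · exact List.isChain_reverse.2 hA
        · rw [List.head?_reverse, List.getLast?_append_cons]; rfl
        · rw [List.getLast?_reverse]
          have : (l1 ++ [m]).head? = (l1 ++ m :: l2).head? := by cases l1 <;> rfl
          rw [this, hhead]
      set r : List V := m :: l2 with hr
      have hrchain : r.Chain' E := hB
      have hrnodup : r.Nodup := hnodup.sublist ((List.suffix_append l1 (m :: l2)).sublist)
      have hrlast : r.getLast? = some v := by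
        rw [← hlast, List.getLast?_append_cons]
      obtain ⟨x, y, hxy⟩ := hX
      -- graph function propagating U m along r
      set g : V → X → List X → X := fun w uw pv =>
        if w = m then uw else pv.getD ((pa w).idxOf (r.getD (r.idxOf w - 1) m)) x with hg
      have hwfE : WellFounded E := Subrelation.wf (fun {a b} h => Relation.TransGen.single h) hwfT
      set f : (V → X) → V → X := fun U =>
        hwfE.fix (fun w ih => g w (U w) ((pa w).attach.map fun p => ih p.1 p.2)) with hf
      have heq : ∀ (U : V → X) (w : V), f U w = g w (U w) ((pa w).map (f U)) := by
        intro U w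
        have h1 := WellFounded.fix_eq hwfE
          (fun w ih => g w (U w) ((pa w).attach.map fun p => ih p.1 p.2)) w
        have h2 : (pa w).attach.map (fun p => f U p.1) = (pa w).map (f U) := by simp
        exact h1.trans (congrArg _ h2)
      have hprop : ∀ (U : V → X) (i : ℕ) (hi : i < r.length), f U r[i] = U m := by
        intro U i
        induction i with
        | zero =>
            intro hi
            have hr0 : r[0] = m := rfl
            rw [heq, hr0]
            simp [hg]
        | succ i ihi =>
            intro hi
            have hi' : i < r.length := by omega
            have hwm : r[i+1] ≠ m := by
              intro h
              have : r[i+1] = r[0]'(by simp [hr]) := by rw [h]; rfl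
              have := (hrnodup.getElem_inj_iff).1 this
              omega
            have hidx : r.idxOf r[i+1] = i + 1 := hrnodup.idxOf_getElem _ _
            have hprev : r.getD (r.idxOf r[i+1] - 1) m = r[i] := by
              rw [hidx]
              simp only [Nat.add_sub_cancel]
              exact List.getD_eq_getElem r m hi'
            have hmem : r[i] ∈ pa (r[i+1]) := by
              have := List.isChain_iff_getElem.1 hrchain i (by omega)
              simpa using this
            have hlt : (pa r[i+1]).idxOf r[i] < (pa r[i+1]).length :=
              List.idxOf_lt_length_iff.2 hmem
            rw [heq, hg]
            simp only [if_neg hwm, hprev]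
            rw [List.getD_eq_getElem _ _ (by simpa using hlt)]
            rw [List.getElem_map]
            rw [List.getElem_idxOf hlt]
            exact ihi hi'
      have hfv : ∀ (U : V → X), f U v = U m := by
        intro U
        have hlr : 0 < r.length := by simp [hr]
        have hv : r[r.length - 1]'(by omega) = v := by
          have := List.getLast?_eq_getLast_of_ne_nil (l := r) (by simp [hr])
          rw [this] at hrlast
          have := Option.some.inj hrlast
          rw [← this]
          exact (List.getLast_eq_getElem _).symm
        rw [← hv]
        exact hprop U _ (by omega)
      set U0 : V → X := fun _ => x with hU0
      set U1 : V → X := fun w => if w = m then y else x with hU1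
      have hagree : ∀ a, ¬ Relation.ReflTransGen E a u → U0 a = U1 a := by
        intro a hna
        have ham : a ≠ m := by rintro rfl; exact hna hmu
        simp [hU0, hU1, ham]
      have := hRHS g f heq U0 U1 hagree
      rw [hfv U0, hfv U1] at this
      simp only [hU0, hU1, if_pos rfl] at this
      exact hxy this
end

section
/- Let P be an acyclic undirected d-connected path given Z from u to v in a DAG, partitioned so that every internal noncollider node of P is either a source (confounder, or endpoint with outgoing path edge) or a transmitter (exactly one path-adjacent parent). Define a graph function f where each source copies its exogenous term, each transmitter copies the value of its path-adjacent parent, and all other nodes are arbitrary. If U assigns the same value α to the exogenous term of every source on P, then every noncollider node w on P satisfies f_U(w) = α; in particular f_U(u) = f_U(v) = α. -/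
section Aux
variable {V : Type} {E : V → V → Prop}

lemma nodup_split_eq {s1 t1 s2 t2 : List V} {y : V}
    (hnd : (s1 ++ y :: t1).Nodup) (h2 : s1 ++ y :: t1 = s2 ++ y :: t2) :
    s1 = s2 ∧ t1 = t2 := by
  induction s1 generalizing s2 with
  | nil =>
    cases s2 with
    | nil => simpa using h2
    | cons b s2' =>
      simp only [List.nil_append, List.cons_append, List.cons.injEq] at h2
      obtain ⟨rfl, rfl⟩ := h2
      simp_all
  | cons a s1' ih =>
    cases s2 with
    | nil =>
      simp only [List.nil_append, List.cons_append, List.cons.injEq] at h2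
      obtain ⟨rfl, rfl⟩ := h2
      simp_all
    | cons b s2' =>
      simp only [List.cons_append, List.cons.injEq] at h2
      obtain ⟨rfl, h2⟩ := h2
      have := ih (by simpa using hnd.of_cons) h2
      exact ⟨by rw [this.1], this.2⟩

lemma left_neighbor_eq {l : List V} {x y a b : V} (hnd : l.Nodup)
    (h1 : [x, y] <:+: l) (h2 : [a, y, b] <:+: l) : a = x := by
  obtain ⟨s, t, h1⟩ := h1
  obtain ⟨s', t', h2⟩ := h2
  have e1 : l = (s ++ [x]) ++ y :: t := by simpa using h1.symm
  have e2 : l = (s' ++ [a]) ++ y :: (b :: t') := by simpa using h2.symm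
  have := nodup_split_eq (e1 ▸ hnd) (e1 ▸ e2)
  have h := this.1
  have : (s ++ [x]).getLast? = (s' ++ [a]).getLast? := by rw [h]
  simpa [List.getLast?_concat] using this.symm

lemma right_neighbor_eq {l : List V} {x y a b : V} (hnd : l.Nodup)
    (h1 : [y, x] <:+: l) (h2 : [a, y, b] <:+: l) : b = x := by
  obtain ⟨s, t, h1⟩ := h1
  obtain ⟨s', t', h2⟩ := h2
  have e1 : l = s ++ y :: (x :: t) := by simpa using h1.symm
  have e2 : l = (s' ++ [a]) ++ y :: (b :: t') := by simpa using h2.symm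
  have := nodup_split_eq (e1 ▸ hnd) (e1 ▸ e2)
  exact (List.cons.injEq .. ▸ this.2).1.symm

lemma not_collider_of_right_out (hacyc : AcyclicRel E) {l : List V} {x y : V}
    (hnd : l.Nodup) (h : [x, y] <:+: l) (hE : E x y) : ¬ Collider E l x := by
  rintro ⟨p, q, hinf, hpx, hqx⟩
  have : q = y := right_neighbor_eq hnd h hinf
  subst this
  exact hacyc x (Relation.TransGen.head hE (Relation.TransGen.single hqx))

lemma not_collider_of_left_out (hacyc : AcyclicRel E) {l : List V} {x y : V}
    (hnd : l.Nodup) (h : [y, x] <:+: l) (hE : E x y) : ¬ Collider E l x := by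
  rintro ⟨p, q, hinf, hpx, hqx⟩
  have : p = y := left_neighbor_eq hnd h hinf
  subst this
  exact hacyc x (Relation.TransGen.head hE (Relation.TransGen.single hpx))

lemma head_not_collider {l : List V} {u : V} (hnd : l.Nodup)
    (hh : l.head? = some u) : ¬ Collider E l u := by
  rintro ⟨p, q, ⟨s, t, hinf⟩, -, -⟩
  subst hinf
  cases s with
  | nil =>
    simp only [List.nil_append, List.cons_append, List.head?_cons,
      Option.some.injEq] at hh
    subst hh
    simp at hnd
  | cons a s' =>
    simp only [List.cons_append, List.head?_cons, Option.some.injEq] at hh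
    subst hh
    simp at hnd

lemma last_not_collider {l : List V} {u : V} (hnd : l.Nodup)
    (hh : l.getLast? = some u) : ¬ Collider E l u := by
  rintro ⟨p, q, ⟨s, t, hinf⟩, -, -⟩
  subst hinf
  have : ((s ++ [p, u]) ++ q :: t).getLast? = some u := by simpa using hh
  rw [List.getLast?_append] at this
  have hq : u ∈ q :: t :=
    List.mem_of_getLast? (l := q :: t) (a := u) (by
      rw [List.getLast?_eq_getLast (l := q :: t) (List.cons_ne_nil q t)] at this ⊢
      simpa using this)
  simp [List.nodup_append] at hnd
  simp at hq
  tauto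
end Aux

/-- On a d-connected path where sources copy their exogenous term and
transmitters copy their path-adjacent parent, a source-fixed assignment makes
every noncollider on the path (in particular both endpoints) evaluate to α. -/
theorem source_fixed_equates_noncollider_values {V X : Type} [Fintype V]
    (E : V → V → Prop) (hacyc : AcyclicRel E) (Z : Set V) (u v : V)
    (l : List V)
    (hpath : UPathFrom E u v l) (hconn : DConnPath E Z l)
    (f : (V → X) → V → X)
    (hsource : ∀ (U' : V → X) (s : V), SourceOn E l s → f U' s = U' s)
    (htrans : ∀ (U' : V → X) (a b : V),
      ([a, b] <:+: l ∨ [b, a] <:+: l) → E a b → ¬ Collider E l b →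
      f U' b = f U' a)
    (U : V → X) (α : X) (hU : ∀ s, SourceOn E l s → U s = α) :
    (∀ w ∈ l, ¬ Collider E l w → f U w = α) ∧ f U u = α ∧ f U v = α := by
  obtain ⟨⟨hchain, hnd⟩, hhead, hlast, hlen⟩ := hpath
  have hirr : IsIrrefl V (Relation.TransGen E) := ⟨hacyc⟩
  have wf : WellFounded (Relation.TransGen E) :=
    Finite.wellFounded_of_trans_of_irrefl _
  have key : ∀ w, w ∈ l → ¬ Collider E l w → f U w = α := by
    intro w
    induction w using wf.induction with
    | _ w IH =>
    intro hw hncol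
    obtain ⟨l1, l2, hl⟩ := List.append_of_mem hw
    cases l2 with
    | cons c l2' =>
      have hwc : [w, c] <:+: l := ⟨l1, l2', by rw [hl]; simp⟩
      have hcmem : c ∈ l := by rw [hl]; simp
      rcases List.isChain_pair.mp (hchain.infix hwc) with hE | hE
      · rcases List.eq_nil_or_concat l1 with rfl | ⟨l1', a, rfl⟩
        · have hsrc : SourceOn E l w := Or.inl ⟨c, ⟨l2', by rw [hl]; simp⟩, hE⟩
          rw [hsource U w hsrc, hU w hsrc]
        · have haw : [a, w] <:+: l := ⟨l1', c :: l2', by rw [hl]; simp⟩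
          have hamem : a ∈ l := by rw [hl]; simp
          rcases List.isChain_pair.mp (hchain.infix haw) with hE2 | hE2
          · rw [htrans U a w (Or.inl haw) hE2 hncol]
            exact IH a (Relation.TransGen.single hE2) hamem
              (not_collider_of_right_out hacyc hnd haw hE2)
          · have hsrc : SourceOn E l w :=
              Or.inr (Or.inr ⟨a, c, ⟨l1', l2', by rw [hl]; simp⟩, hE2, hE⟩)
            rw [hsource U w hsrc, hU w hsrc]
      · rw [htrans U c w (Or.inr hwc) hE hncol]
        exact IH c (Relation.TransGen.single hE) hcmem
          (not_collider_of_left_out hacyc hnd hwc hE)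
    | nil =>
      rcases List.eq_nil_or_concat l1 with rfl | ⟨l1', a, rfl⟩
      · rw [hl] at hlen; simp at hlen
      · have haw : [a, w] <:+: l := ⟨l1', [], by rw [hl]; simp⟩
        have hamem : a ∈ l := by rw [hl]; simp
        rcases List.isChain_pair.mp (hchain.infix haw) with hE2 | hE2
        · rw [htrans U a w (Or.inl haw) hE2 hncol]
          exact IH a (Relation.TransGen.single hE2) hamem
            (not_collider_of_right_out hacyc hnd haw hE2)
        · have hsrc : SourceOn E l w :=
            Or.inr (Or.inl ⟨a, ⟨l1', by rw [hl]; simp⟩, hE2⟩)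
          rw [hsource U w hsrc, hU w hsrc]
  have hu : u ∈ l := List.mem_of_mem_head? (Option.mem_def.mpr hhead)
  have hv : v ∈ l := List.mem_of_getLast? hlast
  exact ⟨key, key u hu (head_not_collider hnd hhead),
    key v hv (last_not_collider hnd hlast)⟩
end
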